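/- arXiv:1602.03575 — 4 statements merged into one kernel-verified Lean document; each statement's English description precedes it below -/
import Mathlib

section
/- Let G ≤ Aut(T) be geometrically dense and act without inversions, and let N ≤ Aut(T) be a nontrivial subgroup normalized by G. Then N is geometrically dense. -/
/-!
STATEMENT 5.  Let G ≤ Aut(T) be geometrically dense and act without inversions, and let
N ≤ Aut(T) be a nontrivial subgroup normalized by G.  Then N is geometrically dense.
-/

def IsTreeAut {V : Type*} (T : SimpleGraph V) (g : Equiv.Perm V) : Prop :=
  ∀ u v : V, T.Adj (g u) (g v) ↔ T.Adj u v

def IsInversion {V : Type*} (T : SimpleGraph V) (g : Equiv.Perm V) : Prop :=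
  ∃ u v : V, T.Adj u v ∧ g u = v ∧ g v = u

def NotLine {V : Type*} (T : SimpleGraph V) : Prop :=
  ¬ ∀ v : V, (T.neighborSet v).ncard = 2

def IsConvex {V : Type*} (T : SimpleGraph V) (X : Set V) : Prop :=
  ∀ u ∈ X, ∀ v ∈ X, ∀ p : T.Walk u v, p.IsPath → ∀ w ∈ p.support, w ∈ X

def IsRay {V : Type*} (T : SimpleGraph V) (r : ℕ → V) : Prop :=
  (∀ n, T.Adj (r n) (r (n+1))) ∧ Function.Injective r

def RayEquiv {V : Type*} (r s : ℕ → V) : Prop :=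
  ∃ m n : ℕ, ∀ i : ℕ, r (m + i) = s (n + i)

/-- A set S of automorphisms is geometrically dense if it fixes no end of T and stabilizes
(setwise) no proper nonempty subtree of T. -/
def GeomDense {V : Type*} (T : SimpleGraph V) (S : Set (Equiv.Perm V)) : Prop :=
  (¬ ∃ r : ℕ → V, IsRay T r ∧ ∀ g ∈ S, RayEquiv (fun n => g (r n)) r) ∧
  ¬ ∃ Y : Set V, Y.Nonempty ∧ IsConvex T Y ∧ Y ≠ Set.univ ∧ ∀ g ∈ S, ∀ v ∈ Y, g v ∈ Y

open scoped Classical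

open SimpleGraph Walk

namespace TreeAux

variable {V : Type*} {T : SimpleGraph V}

noncomputable def gp (hT : T.IsTree) (u v : V) : T.Walk u v :=
  (hT.existsUnique_path u v).exists.choose

lemma gp_isPath (hT : T.IsTree) (u v : V) : (gp hT u v).IsPath :=
  (hT.existsUnique_path u v).exists.choose_spec

lemma gp_eq (hT : T.IsTree) {u v : V} (p : T.Walk u v) (hp : p.IsPath) : p = gp hT u v :=
  (hT.existsUnique_path u v).unique hp (gp_isPath hT u v)

lemma gp_support_subset (hT : T.IsTree) {u v : V} (q : T.Walk u v) :
    (gp hT u v).support ⊆ q.support := by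
  rw [← gp_eq hT q.bypass q.bypass_isPath]; exact q.support_bypass_subset

noncomputable def d (hT : T.IsTree) (u v : V) : ℕ := (gp hT u v).length

lemma d_self (hT : T.IsTree) (u : V) : d hT u u = 0 := by
  rw [d, ← gp_eq hT Walk.nil IsPath.nil]; rfl

lemma eq_of_d_eq_zero (hT : T.IsTree) {u v : V} (h : d hT u v = 0) : u = v :=
  Walk.eq_of_length_eq_zero h

lemma gp_reverse (hT : T.IsTree) (u v : V) : (gp hT u v).reverse = gp hT v u :=
  gp_eq hT _ (gp_isPath hT u v).reverse

lemma mem_gp_symm (hT : T.IsTree) {u v w : V} (h : w ∈ (gp hT u v).support) :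
    w ∈ (gp hT v u).support := by
  rw [← gp_reverse, support_reverse]; exact List.mem_reverse.2 h

lemma takeUntil_gp (hT : T.IsTree) {u v w : V} (h : w ∈ (gp hT u v).support) :
    (gp hT u v).takeUntil w h = gp hT u w :=
  gp_eq hT _ ((gp_isPath hT u v).takeUntil h)

lemma dropUntil_gp (hT : T.IsTree) {u v w : V} (h : w ∈ (gp hT u v).support) :
    (gp hT u v).dropUntil w h = gp hT w v :=
  gp_eq hT _ ((gp_isPath hT u v).dropUntil h)

lemma gp_append (hT : T.IsTree) {u v w : V} (h : w ∈ (gp hT u v).support) :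
    (gp hT u w).append (gp hT w v) = gp hT u v := by
  rw [← takeUntil_gp hT h, ← dropUntil_gp hT h]; exact (gp hT u v).take_spec h

lemma d_add_of_mem (hT : T.IsTree) {u v w : V} (h : w ∈ (gp hT u v).support) :
    d hT u w + d hT w v = d hT u v := by
  have := congrArg Walk.length (gp_append hT h)
  rwa [Walk.length_append] at this

lemma d_le_of_mem (hT : T.IsTree) {u v w : V} (h : w ∈ (gp hT u v).support) :
    d hT u w ≤ d hT u v :=
  le_of_le_of_eq (Nat.le_add_right _ _) (d_add_of_mem hT h)

lemma gp_support_sub_left (hT : T.IsTree) {u v w : V} (h : w ∈ (gp hT u v).support) :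
    (gp hT u w).support ⊆ (gp hT u v).support := by
  intro x hx
  rw [← gp_append hT h, mem_support_append_iff]; exact Or.inl hx

lemma gp_support_sub_right (hT : T.IsTree) {u v w : V} (h : w ∈ (gp hT u v).support) :
    (gp hT w v).support ⊆ (gp hT u v).support := by
  intro x hx
  rw [← gp_append hT h, mem_support_append_iff]; exact Or.inr hx

/-- convexity in tree via canonical geodesics -/
def Conv (hT : T.IsTree) (Y : Set V) : Prop :=
  ∀ u ∈ Y, ∀ v ∈ Y, ∀ w ∈ (gp hT u v).support, w ∈ Y

lemma isConvex_iff (hT : T.IsTree) (Y : Set V) : IsConvex T Y ↔ Conv hT Y := by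
  constructor
  · intro h u hu v hv w hw
    exact h u hu v hv (gp hT u v) (gp_isPath hT u v) w hw
  · intro h u hu v hv p hp w hw
    exact h u hu v hv w (by rw [← gp_eq hT p hp]; exact hw)

lemma conv_inter (hT : T.IsTree) {Y Z : Set V} (hY : Conv hT Y) (hZ : Conv hT Z) :
    Conv hT (Y ∩ Z) := fun u hu v hv w hw =>
  ⟨hY u hu.1 v hv.1 w hw, hZ u hu.2 v hv.2 w hw⟩

lemma gp_support_conv (hT : T.IsTree) {u v x y z : V} (hx : x ∈ (gp hT u v).support)
    (hy : y ∈ (gp hT u v).support) (hz : z ∈ (gp hT x y).support) :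
    z ∈ (gp hT u v).support := by
  have h1 : y ∈ (gp hT u x).support ∨ y ∈ (gp hT x v).support := by
    rw [← gp_append hT hx, mem_support_append_iff] at hy; exact hy
  rcases h1 with h1 | h1
  · -- y on [u,x]; then [x,y] ⊆ [y,x] rev ⊆ [u,x] ⊆ [u,v]
    have h2 : z ∈ (gp hT y x).support := mem_gp_symm hT hz
    have h3 : z ∈ (gp hT u x).support := gp_support_sub_right hT h1 h2
    exact gp_support_sub_left hT hx h3
  · have h3 : z ∈ (gp hT x v).support := gp_support_sub_left hT h1 hz
    exact gp_support_sub_right hT hx h3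

end TreeAux

namespace TreeAux

variable {V : Type*} {T : SimpleGraph V}

lemma getVert_mem_support {u v : V} (p : T.Walk u v) (k : ℕ) :
    p.getVert k ∈ p.support := by
  induction p generalizing k with
  | nil => cases k <;> simp [Walk.getVert]
  | cons h p ih =>
    cases k with
    | zero => simp [Walk.getVert_zero]
    | succ k => rw [Walk.getVert_cons_succ]; exact List.mem_cons_of_mem _ (ih k)

lemma exists_getVert {u v w : V} (p : T.Walk u v) (h : w ∈ p.support) :
    ∃ k ≤ p.length, p.getVert k = w := by
  induction p with
  | nil => refine ⟨0, le_refl _, ?_⟩; simp at h; simp [h, Walk.getVert]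
  | cons ha p ih =>
    rcases List.mem_cons.1 (by simpa using h) with h1 | h1
    · exact ⟨0, Nat.zero_le _, by simp [Walk.getVert_zero, h1.symm]⟩
    · obtain ⟨k, hk, hkeq⟩ := ih h1
      exact ⟨k + 1, by simpa using Nat.succ_le_succ hk, by rwa [Walk.getVert_cons_succ]⟩

lemma getVert_append_left {u v w : V} (p : T.Walk u v) (q : T.Walk v w) {k : ℕ}
    (hk : k ≤ p.length) : (p.append q).getVert k = p.getVert k := by
  rw [Walk.getVert_append]
  rcases lt_or_eq_of_le hk with h | h
  · simp [h]
  · subst h; simp [Walk.getVert_length, Walk.getVert_zero]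

lemma getVert_append_right {u v w : V} (p : T.Walk u v) (q : T.Walk v w) {k : ℕ}
    (hk : p.length ≤ k) : (p.append q).getVert k = q.getVert (k - p.length) := by
  rw [Walk.getVert_append]
  simp [Nat.not_lt.2 hk]

/-- in a tree, the distance from the start to the k-th vertex of a path is k -/
lemma d_getVert (hT : T.IsTree) {u v : V} {p : T.Walk u v} (hp : p.IsPath) :
    ∀ {k : ℕ}, k ≤ p.length → d hT u (p.getVert k) = k := by
  induction p with
  | nil => intro k hk; simp only [Walk.length_nil, Nat.le_zero] at hk; subst hk
           simp [Walk.getVert, d_self]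
  | @cons a b c ha p ih =>
    intro k hk
    cases k with
    | zero => simp [Walk.getVert_zero, d_self]
    | succ k =>
      rw [Walk.getVert_cons_succ]
      have hp' : p.IsPath := hp.of_cons
      have ha' : a ∉ p.support := ((Walk.cons_isPath_iff ha p).1 hp).2
      have hk' : k ≤ p.length := by simpa using hk
      have hmem : p.getVert k ∈ p.support := getVert_mem_support p k
      -- gp b (p.getVert k) has support inside p.support
      have hsub : (gp hT b (p.getVert k)).support ⊆ p.support := by
        have hpg : p = gp hT b c := gp_eq hT p hp'
        intro x hx
        rw [hpg]
        exact gp_support_sub_left hT (show p.getVert k ∈ (gp hT b c).support from hpg ▸ hmem) hx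
      have hnotin : a ∉ (gp hT b (p.getVert k)).support := fun hx => ha' (hsub hx)
      have hpath : (Walk.cons ha (gp hT b (p.getVert k))).IsPath :=
        (Walk.cons_isPath_iff _ _).2 ⟨gp_isPath hT _ _, hnotin⟩
      have : d hT a (p.getVert k) = (Walk.cons ha (gp hT b (p.getVert k))).length := by
        rw [d, ← gp_eq hT _ hpath]
      rw [this, Walk.length_cons]
      have := ih hp' hk'
      rw [d] at this
      rw [this]

lemma getVert_inj (hT : T.IsTree) {u v : V} {p : T.Walk u v} (hp : p.IsPath)
    {i j : ℕ} (hi : i ≤ p.length) (hj : j ≤ p.length) (h : p.getVert i = p.getVert j) :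
    i = j := by
  have h1 := d_getVert hT hp hi
  have h2 := d_getVert hT hp hj
  rw [h] at h1; rw [h1] at h2; exact h2

/-- distance between positions on a geodesic -/
lemma d_getVert_getVert (hT : T.IsTree) {u v : V} {p : T.Walk u v} (hp : p.IsPath)
    {i j : ℕ} (hij : i ≤ j) (hj : j ≤ p.length) :
    d hT (p.getVert i) (p.getVert j) = j - i := by
  have hi : i ≤ p.length := le_trans hij hj
  have hmem : p.getVert i ∈ p.support := getVert_mem_support p i
  have hpgp : p = gp hT u v := gp_eq hT p hp
  -- decompose
  have hmem' : p.getVert i ∈ (gp hT u v).support := by rw [← hpgp]; exact hmem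
  have happ : (gp hT u (p.getVert i)).append (gp hT (p.getVert i) v) = gp hT u v :=
    gp_append hT hmem'
  have hlen1 : (gp hT u (p.getVert i)).length = i := d_getVert hT hp hi
  have hgv : p.getVert j = (gp hT (p.getVert i) v).getVert (j - i) := by
    conv_lhs => rw [hpgp, ← happ]
    rw [getVert_append_right _ _ (by rw [hlen1]; exact hij), hlen1]
  rw [hgv]
  apply d_getVert hT (gp_isPath hT _ _)
  have : (gp hT u (p.getVert i)).length + (gp hT (p.getVert i) v).length = p.length := by
    rw [← Walk.length_append, happ, hpgp]
  omega

end TreeAux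

namespace TreeAux

variable {V : Type*} {T : SimpleGraph V}

def rayWalk (r : ℕ → V) (hadj : ∀ n, T.Adj (r n) (r (n+1))) (a : ℕ) :
    (t : ℕ) → T.Walk (r a) (r (a + t))
  | 0 => Walk.nil
  | (t+1) => (rayWalk r hadj a t).concat (hadj (a+t))

lemma rayWalk_support (r : ℕ → V) (hadj : ∀ n, T.Adj (r n) (r (n+1))) (a : ℕ) (t : ℕ) :
    (rayWalk (T := T) r hadj a t).support = (List.range (t+1)).map (fun k => r (a + k)) := by
  induction t with
  | zero => simp [rayWalk, List.range_succ]
  | succ t ih =>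
    rw [rayWalk, Walk.support_concat, ih]
    rw [show t+1+1 = (t+1)+1 from rfl, List.range_succ (n := t+1)]
    simp

lemma mem_rayWalk_iff (r : ℕ → V) (hadj : ∀ n, T.Adj (r n) (r (n+1))) (a t : ℕ) {x : V} :
    x ∈ (rayWalk (T := T) r hadj a t).support ↔ ∃ k ≤ t, x = r (a + k) := by
  rw [rayWalk_support]
  simp only [List.mem_map, List.mem_range]
  constructor
  · rintro ⟨k, hk, rfl⟩; exact ⟨k, by omega, rfl⟩
  · rintro ⟨k, hk, rfl⟩; exact ⟨k, by omega, rfl⟩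

lemma rayWalk_length (r : ℕ → V) (hadj : ∀ n, T.Adj (r n) (r (n+1))) (a t : ℕ) :
    (rayWalk (T := T) r hadj a t).length = t := by
  induction t with
  | zero => rfl
  | succ t ih => rw [rayWalk, Walk.length_concat, ih]

lemma rayWalk_isPath {r : ℕ → V} (hr : IsRay T r) (a t : ℕ) :
    (rayWalk (T := T) r hr.1 a t).IsPath := by
  induction t with
  | zero => exact Walk.IsPath.nil
  | succ t ih =>
    rw [Walk.isPath_def, rayWalk, Walk.support_concat]
    rw [Walk.isPath_def] at ih
    refine List.Nodup.append ih (List.nodup_singleton _) ?_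
    intro x hx hx'
    rw [List.mem_singleton] at hx'
    subst hx'
    rw [mem_rayWalk_iff] at hx
    obtain ⟨k, hk, hkx⟩ := hx
    have := hr.2 hkx
    omega

lemma gp_ray (hT : T.IsTree) {r : ℕ → V} (hr : IsRay T r) (a t : ℕ) :
    gp hT (r a) (r (a + t)) = rayWalk (T := T) r hr.1 a t :=
  (gp_eq hT _ (rayWalk_isPath hr a t)).symm

lemma d_ray (hT : T.IsTree) {r : ℕ → V} (hr : IsRay T r) (a t : ℕ) :
    d hT (r a) (r (a + t)) = t := by
  rw [d, gp_ray hT hr, rayWalk_length]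

lemma mem_gp_ray_iff (hT : T.IsTree) {r : ℕ → V} (hr : IsRay T r) (a t : ℕ) {x : V} :
    x ∈ (gp hT (r a) (r (a + t))).support ↔ ∃ k ≤ t, x = r (a + k) := by
  rw [gp_ray hT hr, mem_rayWalk_iff]

lemma ray_conv (hT : T.IsTree) {r : ℕ → V} (hr : IsRay T r) :
    Conv hT (Set.range r) := by
  rintro u ⟨i, rfl⟩ v ⟨j, rfl⟩ w hw
  rcases le_total i j with h | h
  · obtain ⟨t, rfl⟩ : ∃ t, j = i + t := ⟨j - i, by omega⟩
    rw [mem_gp_ray_iff hT hr] at hw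
    obtain ⟨k, _, rfl⟩ := hw; exact ⟨i + k, rfl⟩
  · obtain ⟨t, rfl⟩ : ∃ t, i = j + t := ⟨i - j, by omega⟩
    have hw' := mem_gp_symm hT hw
    rw [mem_gp_ray_iff hT hr] at hw'
    obtain ⟨k, _, rfl⟩ := hw'; exact ⟨j + k, rfl⟩

lemma ray_adj_index (hT : T.IsTree) {r : ℕ → V} (hr : IsRay T r) {x y : ℕ}
    (h : T.Adj (r x) (r y)) : y = x + 1 ∨ x = y + 1 := by
  have hxy : x ≠ y := fun he => (T.loopless.irrefl _ (he ▸ h)).elim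
  have key : ∀ a b : ℕ, a < b → T.Adj (r a) (r b) → b = a + 1 := by
    intro a b hab hadj
    by_contra hne
    have h2 : 2 ≤ b - a := by omega
    -- the geodesic from r a to r b is the ray segment, of length b - a
    have hd : d hT (r a) (r b) = b - a := by
      have := d_ray hT hr a (b - a); rwa [Nat.add_sub_cancel' (le_of_lt hab)] at this
    -- but the single edge is a path of length 1
    have hpath : (Walk.cons hadj Walk.nil).IsPath := by
      rw [Walk.isPath_def]
      simp [hr.2.ne (by omega : a ≠ b)]
    have : d hT (r a) (r b) = 1 := by
      rw [d, ← gp_eq hT _ hpath]; rfl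
    omega
  rcases lt_or_gt_of_ne hxy with h1 | h1
  · exact Or.inl (key x y h1 h)
  · exact Or.inr (key y x h1 h.symm)

/-- If a tail of the ray s lies in the range of the ray r, then s and r are equivalent. -/
lemma tail_lemma (hT : T.IsTree) {r s : ℕ → V} (hr : IsRay T r) (hs : IsRay T s)
    {J : ℕ} (h : ∀ j, J ≤ j → s j ∈ Set.range r) : RayEquiv s r := by
  have hch : ∀ j : ℕ, ∃ k, r k = s (J + j) := by
    intro j
    obtain ⟨k, hk⟩ := h (J + j) (Nat.le_add_right _ _)
    exact ⟨k, hk⟩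
  choose f hf using hch
  have hstep : ∀ j, f (j + 1) = f j + 1 ∨ f j = f (j + 1) + 1 := by
    intro j
    have hadj : T.Adj (r (f j)) (r (f (j+1))) := by
      rw [hf, hf]
      have := hs.1 (J + j)
      have he : J + j + 1 = J + (j + 1) := by omega
      rwa [he] at this
    exact ray_adj_index hT hr hadj
  have hfinj : Function.Injective f := by
    intro a b hab
    have : s (J + a) = s (J + b) := by rw [← hf, ← hf, hab]
    have := hs.2 this
    omega
  -- all steps must be +1
  have hup : ∀ j, f (j + 1) = f j + 1 := by
    intro j
    by_contra hbad
    have hdn : f j = f (j + 1) + 1 := (hstep j).resolve_left hbad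
    -- then descending forever
    have hdesc : ∀ t, f (j + t + 1) + 1 = f (j + t) := by
      intro t
      induction t with
      | zero => simpa using hdn.symm
      | succ t ih =>
        have he : j + (t + 1) = j + t + 1 := by omega
        rw [he]
        rcases hstep (j + t + 1) with h1 | h1
        · exfalso
          have h2 : f (j + t + 1 + 1) = f (j + t) := by omega
          have := hfinj h2
          omega
        · omega
    have hsum : ∀ t, f (j + t) + t = f j := by
      intro t
      induction t with
      | zero => simp
      | succ t ih =>
        have h3 := hdesc t
        have he : j + (t + 1) = j + t + 1 := by omega
        rw [he]; omega
    have := hsum (f j + 1)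
    omega
  have hlin : ∀ t, f t = f 0 + t := by
    intro t
    induction t with
    | zero => simp
    | succ t ih => rw [hup t, ih]; omega
  refine ⟨J, f 0, fun i => ?_⟩
  rw [← hf i, hlin i, Nat.add_comm (f 0) i]

lemma hits_to_tail (hT : T.IsTree) {r s : ℕ → V} (hr : IsRay T r) (hs : IsRay T s)
    (h : ∀ J, ∃ j, J ≤ j ∧ s j ∈ Set.range r) : RayEquiv s r := by
  obtain ⟨j₀, _, hj₀⟩ := h 0
  apply tail_lemma hT hr hs (J := j₀)
  intro j hj
  obtain ⟨j', hj', hj'mem⟩ := h j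
  -- s j lies on the geodesic from s j₀ to s j', which lies in range r
  have hconv := ray_conv hT hr
  have hmem : s j ∈ (gp hT (s j₀) (s (j₀ + (j' - j₀)))).support := by
    rw [mem_gp_ray_iff hT hs]
    exact ⟨j - j₀, by omega, by congr 1; omega⟩
  have he : j₀ + (j' - j₀) = j' := by omega
  rw [he] at hmem
  exact hconv _ hj₀ _ hj'mem _ hmem

end TreeAux

namespace TreeAux

variable {V : Type*} {T : SimpleGraph V}

def autHom (θ : Equiv.Perm V) (hθ : IsTreeAut T θ) : T →g T :=
  ⟨θ.toFun, fun h => (hθ _ _).mpr h⟩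

@[simp] lemma autHom_apply (θ : Equiv.Perm V) (hθ : IsTreeAut T θ) (v : V) :
    autHom θ hθ v = θ v := rfl

lemma gp_map (hT : T.IsTree) (θ : Equiv.Perm V) (hθ : IsTreeAut T θ) (u v : V) :
    (gp hT u v).map (autHom θ hθ) = gp hT (θ u) (θ v) :=
  gp_eq hT _ (Walk.map_isPath_of_injective (θ.injective) (gp_isPath hT u v))

lemma mem_gp_map (hT : T.IsTree) (θ : Equiv.Perm V) (hθ : IsTreeAut T θ) {u v w : V}
    (h : w ∈ (gp hT u v).support) : θ w ∈ (gp hT (θ u) (θ v)).support := by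
  rw [← gp_map hT θ hθ]; erw [Walk.support_map]
  exact List.mem_map.2 ⟨w, h, rfl⟩

lemma gp_support_map (hT : T.IsTree) (θ : Equiv.Perm V) (hθ : IsTreeAut T θ) (u v : V) :
    (gp hT (θ u) (θ v)).support = (gp hT u v).support.map θ := by
  rw [← gp_map hT θ hθ]; erw [Walk.support_map]; rfl

lemma d_map (hT : T.IsTree) (θ : Equiv.Perm V) (hθ : IsTreeAut T θ) (u v : V) :
    d hT (θ u) (θ v) = d hT u v := by
  rw [d, d, ← gp_map hT θ hθ]; erw [Walk.length_map]

lemma getVert_map {W : Type*} {S : SimpleGraph W} (f : T →g S) {u v : V}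
    (p : T.Walk u v) (k : ℕ) : (p.map f).getVert k = f (p.getVert k) := by
  induction p generalizing k with
  | nil => simp [Walk.getVert]
  | cons h p ih =>
    cases k with
    | zero => simp [Walk.getVert_zero]
    | succ k => rw [Walk.map_cons, Walk.getVert_cons_succ, Walk.getVert_cons_succ, ih]

lemma conv_image (hT : T.IsTree) (θ : Equiv.Perm V) (hθ : IsTreeAut T θ) {Y : Set V}
    (hY : Conv hT Y) : Conv hT (θ '' Y) := by
  rintro u ⟨u₀, hu₀, rfl⟩ v ⟨v₀, hv₀, rfl⟩ w hw
  rw [gp_support_map hT θ hθ] at hw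
  obtain ⟨w₀, hw₀, rfl⟩ := List.mem_map.1 hw
  exact ⟨w₀, hY _ hu₀ _ hv₀ _ hw₀, rfl⟩

/-! ### Gates -/

lemma first_entry {Y : Set V} {v y : V} (p : T.Walk v y) : y ∈ Y →
    ∃ a, a ∈ Y ∧ ∃ (q : T.Walk v a) (q' : T.Walk a y), q.append q' = p ∧
      ∀ w ∈ q.support, w ∈ Y → w = a := by
  induction p with
  | nil =>
    intro hy
    exact ⟨_, hy, Walk.nil, Walk.nil, rfl, fun w hw _ => by simpa using hw⟩
  | @cons a b c h p ih =>
    intro hy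
    by_cases hv : a ∈ Y
    · exact ⟨a, hv, Walk.nil, Walk.cons h p, rfl, fun w hw _ => by simpa using hw⟩
    · obtain ⟨x, hx, q, q', hq, hfe⟩ := ih hy
      refine ⟨x, hx, Walk.cons h q, q', by rw [Walk.cons_append, hq], ?_⟩
      intro w hw hwY
      rcases List.mem_cons.1 (by simpa using hw) with h1 | h1
      · exact absurd (h1 ▸ hwY) hv
      · exact hfe w h1 hwY

lemma exists_gate (hT : T.IsTree) {Y : Set V} (hc : Conv hT Y) {y₀ : V} (hy₀ : y₀ ∈ Y)
    (v : V) : ∃ a, a ∈ Y ∧ ∀ y ∈ Y, a ∈ (gp hT v y).support := by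
  obtain ⟨a, ha, q, q', hq, hfe⟩ := first_entry (gp hT v y₀) hy₀
  have hqpath : q.IsPath := by
    have := (hq ▸ gp_isPath hT v y₀)
    rw [Walk.isPath_def] at this ⊢
    have hsub : q.support.Sublist (q.append q').support := by
      rw [Walk.support_append]
      exact List.sublist_append_left _ _
    exact hsub.nodup this
  have hqgp : q = gp hT v a := gp_eq hT q hqpath
  refine ⟨a, ha, fun y hy => ?_⟩
  -- the concatenation gp v a ++ gp a y is a path
  have hdisj : ∀ x, x ∈ (gp hT v a).support → x ∈ (gp hT a y).support.tail → False := by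
    intro x hx hx'
    have hx'' : x ∈ (gp hT a y).support := by
      rw [Walk.support_eq_cons (gp hT a y)]
      exact List.mem_cons_of_mem _ hx'
    have hxY : x ∈ Y := hc a ha y hy x hx''
    have hxa : x = a := hfe x (by rwa [hqgp]) hxY
    rw [hxa] at hx'
    have hnd := (gp_isPath hT a y)
    rw [Walk.isPath_def, Walk.support_eq_cons (gp hT a y)] at hnd
    exact (List.nodup_cons.1 hnd).1 hx'
  have happpath : ((gp hT v a).append (gp hT a y)).IsPath := by
    rw [Walk.isPath_def, Walk.support_append]
    refine List.Nodup.append ?_ ?_ ?_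
    · exact (Walk.isPath_def _).1 (gp_isPath hT v a)
    · have := (Walk.isPath_def _).1 (gp_isPath hT a y)
      rw [Walk.support_eq_cons (gp hT a y)] at this
      exact (List.nodup_cons.1 this).2
    · intro x hx hx'
      exact hdisj x hx hx'
  have : (gp hT v a).append (gp hT a y) = gp hT v y := gp_eq hT _ happpath
  rw [← this, Walk.mem_support_append_iff]
  exact Or.inl (Walk.end_mem_support _)

lemma gate_unique (hT : T.IsTree) {Y : Set V} {v a b : V}
    (ha : a ∈ Y) (hsa : ∀ y ∈ Y, a ∈ (gp hT v y).support)
    (hb : b ∈ Y) (hsb : ∀ y ∈ Y, b ∈ (gp hT v y).support) : a = b := by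
  have h1 : a ∈ (gp hT v b).support := hsa b hb
  have h2 : b ∈ (gp hT v a).support := hsb a ha
  have e1 := d_add_of_mem hT h1
  have e2 := d_add_of_mem hT h2
  have : d hT a b = 0 := by omega
  exact eq_of_d_eq_zero hT this

noncomputable def gate (hT : T.IsTree) (Y : Set V) (hc : Conv hT Y) (hne : Y.Nonempty)
    (v : V) : V :=
  (exists_gate hT hc hne.choose_spec v).choose

lemma gate_mem (hT : T.IsTree) (Y : Set V) (hc : Conv hT Y) (hne : Y.Nonempty) (v : V) :
    gate hT Y hc hne v ∈ Y :=
  (exists_gate hT hc hne.choose_spec v).choose_spec.1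

lemma gate_spec (hT : T.IsTree) (Y : Set V) (hc : Conv hT Y) (hne : Y.Nonempty) (v : V) :
    ∀ y ∈ Y, gate hT Y hc hne v ∈ (gp hT v y).support :=
  (exists_gate hT hc hne.choose_spec v).choose_spec.2

lemma gate_eq (hT : T.IsTree) {Y : Set V} {hc : Conv hT Y} {hne : Y.Nonempty} {v b : V}
    (hb : b ∈ Y) (hsb : ∀ y ∈ Y, b ∈ (gp hT v y).support) : gate hT Y hc hne v = b :=
  gate_unique hT (gate_mem hT Y hc hne v) (gate_spec hT Y hc hne v) hb hsb

lemma gate_first_entry (hT : T.IsTree) (Y : Set V) (hc : Conv hT Y) (hne : Y.Nonempty)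
    (v : V) {w : V} (hw : w ∈ (gp hT v (gate hT Y hc hne v)).support) (hwY : w ∈ Y) :
    w = gate hT Y hc hne v := by
  set a := gate hT Y hc hne v with ha
  have h1 : a ∈ (gp hT v w).support := gate_spec hT Y hc hne v w hwY
  have e1 := d_add_of_mem hT h1
  have e2 := d_add_of_mem hT hw
  have : d hT w a = 0 := by omega
  exact eq_of_d_eq_zero hT this

/-- gates from points of a disjoint convex set are constant -/
lemma gate_const (hT : T.IsTree) {Y Z : Set V} (hcY : Conv hT Y) (hneY : Y.Nonempty)
    (hcZ : Conv hT Z) (hdisj : ∀ x ∈ Z, x ∉ Y) {z z' : V} (hz : z ∈ Z) (hz' : z' ∈ Z) :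
    gate hT Y hcY hneY z = gate hT Y hcY hneY z' := by
  set w := gate hT Y hcY hneY z with hwdef
  set w' := gate hT Y hcY hneY z' with hw'def
  have hw'mem : w' ∈ (gp hT z' w).support :=
    gate_spec hT Y hcY hneY z' w (gate_mem hT Y hcY hneY z)
  -- the geodesic from z' to w is inside the walk z' → z → w
  have hsub : (gp hT z' w).support ⊆ ((gp hT z' z).append (gp hT z w)).support :=
    gp_support_subset hT _
  have := hsub hw'mem
  rw [Walk.mem_support_append_iff] at this
  rcases this with h1 | h1
  · exact absurd (hcZ z' hz' z hz w' h1) (fun hmem => hdisj w' hmem (gate_mem hT Y hcY hneY z'))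
  · exact (gate_first_entry hT Y hcY hneY z h1 (gate_mem hT Y hcY hneY z')).symm

/-- equivariance of gates -/
lemma gate_image (hT : T.IsTree) (θ : Equiv.Perm V) (hθ : IsTreeAut T θ) {Y : Set V}
    (hc : Conv hT Y) (hne : Y.Nonempty) (v : V) :
    gate hT (θ '' Y) (conv_image hT θ hθ hc) (hne.image θ) (θ v)
      = θ (gate hT Y hc hne v) := by
  apply gate_eq
  · exact ⟨_, gate_mem hT Y hc hne v, rfl⟩
  · rintro y ⟨y₀, hy₀, rfl⟩
    exact mem_gp_map hT θ hθ (gate_spec hT Y hc hne v y₀ hy₀)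

/-! ### Helly property -/

lemma helly3 (hT : T.IsTree) {Y₁ Y₂ Y₃ : Set V} (h1 : Conv hT Y₁) (h2 : Conv hT Y₂)
    (h3 : Conv hT Y₃) (h12 : (Y₁ ∩ Y₂).Nonempty) (h13 : (Y₁ ∩ Y₃).Nonempty)
    (h23 : (Y₂ ∩ Y₃).Nonempty) : (Y₁ ∩ Y₂ ∩ Y₃).Nonempty := by
  obtain ⟨p, hp1, hp2⟩ := h12
  obtain ⟨q, hq1, hq3⟩ := h13
  obtain ⟨z, hz2, hz3⟩ := h23
  set S : Set V := {x | x ∈ (gp hT p q).support} with hS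
  have hcS : Conv hT S := fun a ha b hb w hw => gp_support_conv hT ha hb hw
  have hneS : S.Nonempty := ⟨p, Walk.start_mem_support _⟩
  set m := gate hT S hcS hneS z with hm
  have hmS : m ∈ S := gate_mem hT S hcS hneS z
  have hmY1 : m ∈ Y₁ := h1 p hp1 q hq1 m hmS
  have hmY2 : m ∈ Y₂ := h2 z hz2 p hp2 m (gate_spec hT S hcS hneS z p (Walk.start_mem_support _))
  have hmY3 : m ∈ Y₃ := h3 z hz3 q hq3 m (gate_spec hT S hcS hneS z q (Walk.end_mem_support _))
  exact ⟨m, ⟨hmY1, hmY2⟩, hmY3⟩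

lemma helly_list (hT : T.IsTree) :
    ∀ (l : List (Set V)), (∀ Y ∈ l, Conv hT Y) →
      (∀ Y ∈ l, ∀ Z ∈ l, (Y ∩ Z).Nonempty) →
      ∀ (W : Set V), Conv hT W → W.Nonempty → (∀ Y ∈ l, (Y ∩ W).Nonempty) →
      ∃ x, x ∈ W ∧ ∀ Y ∈ l, x ∈ Y := by
  intro l
  induction l with
  | nil => intro _ _ W _ hne _; exact ⟨hne.choose, hne.choose_spec, by simp⟩
  | cons Y l ih =>
    intro hconv hpair W hcW hneW hmeet
    have hY : Conv hT Y := hconv Y (List.mem_cons_self)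
    have hYW : (Y ∩ W).Nonempty := hmeet Y (List.mem_cons_self)
    obtain ⟨x, hx, hxl⟩ := ih (fun Z hZ => hconv Z (List.mem_cons_of_mem _ hZ))
      (fun Z hZ Z' hZ' => hpair Z (List.mem_cons_of_mem _ hZ) Z' (List.mem_cons_of_mem _ hZ'))
      (Y ∩ W) (conv_inter hT hY hcW) hYW
      (fun Z hZ => by
        have := helly3 hT (hconv Z (List.mem_cons_of_mem _ hZ)) hY hcW
          (hpair Z (List.mem_cons_of_mem _ hZ) Y (List.mem_cons_self))
          (hmeet Z (List.mem_cons_of_mem _ hZ)) hYW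
        rwa [Set.inter_assoc] at this)
    exact ⟨x, hx.2, fun Z hZ => by
      rcases List.mem_cons.1 hZ with h | h
      · exact h ▸ hx.1
      · exact hxl Z h⟩

end TreeAux

namespace TreeAux

variable {V : Type*} {T : SimpleGraph V}

/-- invariance of a set under a subgroup -/
def Ninv (N : Subgroup (Equiv.Perm V)) (Y : Set V) : Prop :=
  ∀ n ∈ N, ∀ v ∈ Y, n v ∈ Y

lemma ninv_image_eq {N : Subgroup (Equiv.Perm V)} {Y : Set V} (h : Ninv N Y)
    {n : Equiv.Perm V} (hn : n ∈ N) : n '' Y = Y := by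
  apply Set.Subset.antisymm
  · rintro x ⟨y, hy, rfl⟩; exact h n hn y hy
  · intro y hy
    exact ⟨n⁻¹ y, h n⁻¹ (inv_mem hn) y hy, by simp⟩

/-- an automorphism fixing the endpoints fixes the geodesic pointwise -/
lemma fix_geodesic (hT : T.IsTree) {θ : Equiv.Perm V} (hθ : IsTreeAut T θ) {u v : V}
    (hu : θ u = u) (hv : θ v = v) {w : V} (hw : w ∈ (gp hT u v).support) : θ w = w := by
  have h1 : (gp hT u v).support.map θ = (gp hT u v).support := by
    rw [← gp_support_map hT θ hθ u v, hu, hv]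
  obtain ⟨i, hi⟩ := List.getElem?_of_mem hw
  have := congrArg (fun t => t[i]?) h1
  simp only [List.getElem?_map, hi] at this
  simpa using this

/-- the fixed-point set of a nontrivial normal subgroup is empty -/
lemma fix_empty (hT : T.IsTree)
    (G : Subgroup (Equiv.Perm V)) (hgd : GeomDense T (G : Set (Equiv.Perm V)))
    (N : Subgroup (Equiv.Perm V)) (hN : ∀ n ∈ N, IsTreeAut T n) (hNnt : N ≠ ⊥)
    (hnorm : ∀ g ∈ G, ∀ n ∈ N, g * n * g⁻¹ ∈ N) (v : V) :
    ∃ n ∈ N, n v ≠ v := by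
  by_contra hcon
  push_neg at hcon
  set F : Set V := {x | ∀ n ∈ N, n x = x} with hF
  have hvF : v ∈ F := fun n hn => hcon n hn
  -- F is convex
  have hcF : Conv hT F := by
    intro a ha b hb w hw n hn
    exact fix_geodesic hT (hN n hn) (ha n hn) (hb n hn) hw
  -- F is not everything
  have hFne_univ : F ≠ Set.univ := by
    intro hco
    apply hNnt
    rw [eq_bot_iff]
    intro n hn
    have : ∀ x : V, n x = x := fun x => (hco ▸ Set.mem_univ x : x ∈ F) n hn
    have : n = 1 := Equiv.ext fun x => this x
    simp [this, Subgroup.mem_bot]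
  -- F is G-invariant
  have hGF : ∀ g ∈ G, ∀ x ∈ F, g x ∈ F := by
    intro g hg x hx n hn
    have hmem : g⁻¹ * n * g ∈ N := by
      have := hnorm g⁻¹ (inv_mem hg) n hn
      simpa using this
    have hfix : (g⁻¹ * n * g) x = x := hx _ hmem
    have : n (g x) = g ((g⁻¹ * n * g) x) := by
      simp [Equiv.Perm.mul_apply]
    rw [this, hfix]
  exact hgd.2 ⟨F, ⟨v, hvF⟩, (isConvex_iff hT F).2 hcF, hFne_univ, hGF⟩

/-- two nonempty convex N-invariant sets must intersect -/
lemma ninv_meet (hT : T.IsTree)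
    (G : Subgroup (Equiv.Perm V)) (hgd : GeomDense T (G : Set (Equiv.Perm V)))
    (N : Subgroup (Equiv.Perm V)) (hN : ∀ n ∈ N, IsTreeAut T n) (hNnt : N ≠ ⊥)
    (hnorm : ∀ g ∈ G, ∀ n ∈ N, g * n * g⁻¹ ∈ N)
    {Y Z : Set V} (hcY : Conv hT Y) (hneY : Y.Nonempty) (hNY : Ninv N Y)
    (hcZ : Conv hT Z) (hneZ : Z.Nonempty) (hNZ : Ninv N Z) :
    (Y ∩ Z).Nonempty := by
  by_contra hcon
  have hdisj : ∀ x ∈ Z, x ∉ Y := by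
    intro x hx hx'
    exact hcon ⟨x, hx', hx⟩
  obtain ⟨z₀, hz₀⟩ := hneZ
  set a := gate hT Y hcY hneY z₀ with ha
  have hfix : ∀ n ∈ N, n a = a := by
    intro n hn
    -- n a is the gate of n z₀
    have h1 : n a = gate hT Y hcY hneY (n z₀) := by
      symm
      apply gate_eq
      · exact hNY n hn a (gate_mem hT Y hcY hneY z₀)
      · intro y hy
        have hy' : (n⁻¹ : Equiv.Perm V) y ∈ Y := hNY n⁻¹ (inv_mem hn) y hy
        have := mem_gp_map hT n (hN n hn) (gate_spec hT Y hcY hneY z₀ _ hy')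
        rwa [← Equiv.Perm.mul_apply, mul_inv_cancel, Equiv.Perm.one_apply] at this
    rw [h1]
    exact (gate_const hT hcY hneY hcZ hdisj (hNZ n hn z₀ hz₀) hz₀)
  obtain ⟨n, hn, hna⟩ := fix_empty hT G hgd N hN hNnt hnorm a
  exact hna (hfix n hn)

end TreeAux

namespace TreeAux

variable {V : Type*} {T : SimpleGraph V}

lemma gate_sub (hT : T.IsTree) {W W' : Set V} (hc : Conv hT W) (hne : W.Nonempty)
    (hc' : Conv hT W') (hne' : W'.Nonempty) (hsub : W' ⊆ W) (v : V) :
    gate hT W hc hne v ∈ (gp hT v (gate hT W' hc' hne' v)).support ∧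
    d hT v (gate hT W hc hne v) + d hT (gate hT W hc hne v) (gate hT W' hc' hne' v)
      = d hT v (gate hT W' hc' hne' v) := by
  have h1 : gate hT W hc hne v ∈ (gp hT v (gate hT W' hc' hne' v)).support :=
    gate_spec hT W hc hne v _ (hsub (gate_mem hT W' hc' hne' v))
  exact ⟨h1, d_add_of_mem hT h1⟩

lemma main2 {T : SimpleGraph V} (hT : T.IsTree)
    (G : Subgroup (Equiv.Perm V)) (hG : ∀ g ∈ G, IsTreeAut T g)
    (hgd : GeomDense T (G : Set (Equiv.Perm V)))
    (N : Subgroup (Equiv.Perm V)) (hN : ∀ n ∈ N, IsTreeAut T n) (hNnt : N ≠ ⊥)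
    (hnorm : ∀ g ∈ G, ∀ n ∈ N, g * n * g⁻¹ ∈ N) :
    ¬ ∃ Y : Set V, Y.Nonempty ∧ IsConvex T Y ∧ Y ≠ Set.univ ∧ Ninv N Y := by
  rintro ⟨Y, hneY, hconvY', hprop, hNY⟩
  have hcY : Conv hT Y := (isConvex_iff hT Y).1 hconvY'
  -- images of Y under elements of G
  have himconv : ∀ g ∈ G, Conv hT ((g : Equiv.Perm V) '' Y) :=
    fun g hg => conv_image hT g (hG g hg) hcY
  have himninv : ∀ g ∈ G, Ninv N ((g : Equiv.Perm V) '' Y) := by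
    intro g hg n hn x hx
    obtain ⟨y, hy, rfl⟩ := hx
    have hmem : g⁻¹ * n * g ∈ N := by
      have := hnorm g⁻¹ (inv_mem hg) n hn
      simpa using this
    refine ⟨(g⁻¹ * n * g) y, hNY _ hmem y hy, ?_⟩
    simp [Equiv.Perm.mul_apply]
  have himne : ∀ g : Equiv.Perm V, ((g : Equiv.Perm V) '' Y).Nonempty := fun g => hneY.image g
  have hpairwise : ∀ g ∈ G, ∀ g' ∈ G, ((g : Equiv.Perm V) '' Y ∩ (g' : Equiv.Perm V) '' Y).Nonempty := by
    intro g hg g' hg'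
    exact ninv_meet hT G hgd N hN hNnt hnorm (himconv g hg) (himne g) (himninv g hg)
      (himconv g' hg') (himne g') (himninv g' hg')
  -- the collection of finite intersections
  set isC : Set V → Prop := fun W => ∃ l : List (Equiv.Perm V), (∀ g ∈ l, g ∈ G) ∧
    W = {x | ∀ g ∈ l, x ∈ (g : Equiv.Perm V) '' Y} with hisC
  have hCY : isC Y := by
    refine ⟨[1], by simp [one_mem], ?_⟩
    ext x
    simp [Equiv.Perm.one_symm]
  have hCconv : ∀ W, isC W → Conv hT W := by
    rintro W ⟨l, hl, rfl⟩
    intro a ha b hb w hw g hg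
    exact himconv g (hl g hg) a (ha g hg) b (hb g hg) w hw
  have hCninv : ∀ W, isC W → Ninv N W := by
    rintro W ⟨l, hl, rfl⟩
    intro n hn x hx g hg
    exact himninv g (hl g hg) n hn x (hx g hg)
  have hCne : ∀ W, isC W → W.Nonempty := by
    rintro W ⟨l, hl, rfl⟩
    obtain ⟨x, hxY, hxl⟩ := helly_list hT (l.map (fun g => (g : Equiv.Perm V) '' Y))
      (by
        intro Z hZ
        obtain ⟨g, hg, rfl⟩ := List.mem_map.1 hZ
        exact himconv g (hl g hg))
      (by
        intro Z hZ Z' hZ'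
        obtain ⟨g, hg, rfl⟩ := List.mem_map.1 hZ
        obtain ⟨g', hg', rfl⟩ := List.mem_map.1 hZ'
        exact hpairwise g (hl g hg) g' (hl g' hg'))
      Y hcY hneY
      (by
        intro Z hZ
        obtain ⟨g, hg, rfl⟩ := List.mem_map.1 hZ
        exact ninv_meet hT G hgd N hN hNnt hnorm (himconv g (hl g hg)) (himne g)
          (himninv g (hl g hg)) hcY hneY hNY)
    exact ⟨x, fun g hg => hxl _ (List.mem_map.2 ⟨g, hg, rfl⟩)⟩
  have hCinter : ∀ W W', isC W → isC W' → isC (W ∩ W') := by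
    rintro W W' ⟨l, hl, rfl⟩ ⟨l', hl', rfl⟩
    refine ⟨l ++ l', ?_, ?_⟩
    · intro g hg
      rcases List.mem_append.1 hg with h | h
      · exact hl g h
      · exact hl' g h
    · ext x
      constructor
      · rintro ⟨h1, h2⟩ g hg
        rcases List.mem_append.1 hg with h | h
        · exact h1 g h
        · exact h2 g h
      · intro hx
        exact ⟨fun g hg => hx g (List.mem_append.2 (Or.inl hg)),
               fun g hg => hx g (List.mem_append.2 (Or.inr hg))⟩
  have hCimage : ∀ h ∈ G, ∀ W, isC W → isC ((h : Equiv.Perm V) '' W) := by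
    rintro h hh W ⟨l, hl, rfl⟩
    refine ⟨l.map (fun g => h * g), ?_, ?_⟩
    · intro g hg
      obtain ⟨g₀, hg₀, rfl⟩ := List.mem_map.1 hg
      exact mul_mem hh (hl g₀ hg₀)
    · ext x
      constructor
      · rintro ⟨x₀, hx₀, rfl⟩ g hg
        obtain ⟨g₀, hg₀, rfl⟩ := List.mem_map.1 hg
        obtain ⟨y, hy, rfl⟩ := hx₀ g₀ hg₀
        exact ⟨y, hy, by simp [Equiv.Perm.mul_apply]⟩
      · intro hx
        refine ⟨h⁻¹ x, ?_, by simp⟩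
        intro g hg
        obtain ⟨y, hy, hyx⟩ := hx (h * g) (List.mem_map.2 ⟨g, hg, rfl⟩)
        refine ⟨y, hy, ?_⟩
        rw [Equiv.Perm.mul_apply] at hyx
        rw [← hyx]
        simp
  -- case on the global intersection
  by_cases hC : (∃ x : V, ∀ g ∈ G, x ∈ (g : Equiv.Perm V) '' Y)
  · -- case 1 : global intersection nonempty; contradicts geometric density of G
    set C : Set V := {x | ∀ g ∈ G, x ∈ (g : Equiv.Perm V) '' Y} with hCdef
    apply hgd.2
    refine ⟨C, hC, ?_, ?_, ?_⟩
    · apply (isConvex_iff hT C).2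
      intro a ha b hb w hw g hg
      exact himconv g hg a (ha g hg) b (hb g hg) w hw
    · intro hco
      apply hprop
      have hsub : C ⊆ Y := by
        intro x hx
        have h1 := hx 1 (one_mem G)
        simpa using h1
      apply Set.Subset.antisymm (Set.subset_univ Y)
      intro x _
      exact hsub (by rw [hco]; exact Set.mem_univ x)
    · intro g hg x hx g' hg'
      obtain ⟨y, hy, hyx⟩ := hx (g⁻¹ * g') (mul_mem (inv_mem hg) hg')
      refine ⟨y, hy, ?_⟩
      rw [← hyx]
      simp [Equiv.Perm.mul_apply]
  · -- case 2 : empty global intersection; construct a G-fixed end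
    push_neg at hC
    have hV : Nonempty V := hT.isConnected.nonempty
    set v₀ : V := Classical.arbitrary V with hv₀
    -- gates are unbounded
    have hunb : ∀ k : ℕ, ∃ W, ∃ h : isC W,
        k ≤ d hT v₀ (gate hT W (hCconv W h) (hCne W h) v₀) := by
      intro k
      by_contra hbd
      push_neg at hbd
      set S : Set ℕ := {m | ∃ W, ∃ h : isC W,
        m = d hT v₀ (gate hT W (hCconv W h) (hCne W h) v₀)} with hSdef
      have hSne : S.Nonempty := ⟨_, Y, hCY, rfl⟩
      have hSbdd : BddAbove S := by
        refine ⟨k, ?_⟩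
        rintro m ⟨W, h, rfl⟩
        exact le_of_lt (hbd W h)
      have hM : sSup S ∈ S := Nat.sSup_mem hSne hSbdd
      obtain ⟨W₀, h₀, hMd⟩ := hM
      -- the gate of W₀ lies in every g '' Y
      obtain ⟨g, hg, hnotmem⟩ := hC (gate hT W₀ (hCconv W₀ h₀) (hCne W₀ h₀) v₀)
      apply hnotmem
      have hgY : isC ((g : Equiv.Perm V) '' Y) := by
        refine ⟨[g], by simpa using hg, ?_⟩
        ext x; simp
      have h₁ : isC (W₀ ∩ (g : Equiv.Perm V) '' Y) := hCinter _ _ h₀ hgY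
      have hsub : (W₀ ∩ (g : Equiv.Perm V) '' Y) ⊆ W₀ := Set.inter_subset_left
      obtain ⟨hmem, hadd⟩ := gate_sub hT (hCconv W₀ h₀) (hCne W₀ h₀)
        (hCconv _ h₁) (hCne _ h₁) hsub v₀
      have hle : d hT v₀ (gate hT _ (hCconv _ h₁) (hCne _ h₁) v₀) ≤ sSup S :=
        le_csSup hSbdd ⟨_, h₁, rfl⟩
      have hzero : d hT (gate hT W₀ (hCconv W₀ h₀) (hCne W₀ h₀) v₀)
          (gate hT _ (hCconv _ h₁) (hCne _ h₁) v₀) = 0 := by omega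
      have hgg := eq_of_d_eq_zero hT hzero
      have := gate_mem hT _ (hCconv _ h₁) (hCne _ h₁) v₀
      rw [← hgg] at this
      exact this.2
    choose Wk hWkC hWkd using hunb
    set r : ℕ → V := fun k =>
      (gp hT v₀ (gate hT (Wk k) (hCconv _ (hWkC k)) (hCne _ (hWkC k)) v₀)).getVert k with hrdef
    -- coherence
    have rco : ∀ W, ∀ h : isC W, ∀ k : ℕ,
        k ≤ d hT v₀ (gate hT W (hCconv W h) (hCne W h) v₀) →
        r k = (gp hT v₀ (gate hT W (hCconv W h) (hCne W h) v₀)).getVert k := by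
      intro W h k hk
      have h₃ : isC (W ∩ Wk k) := hCinter _ _ h (hWkC k)
      have key : ∀ W', ∀ h' : isC W', (W ∩ Wk k) ⊆ W' →
          k ≤ d hT v₀ (gate hT W' (hCconv W' h') (hCne W' h') v₀) →
          (gp hT v₀ (gate hT W' (hCconv W' h') (hCne W' h') v₀)).getVert k
            = (gp hT v₀ (gate hT _ (hCconv _ h₃) (hCne _ h₃) v₀)).getVert k := by
        intro W' h' hsub hk'
        obtain ⟨hmem, hadd⟩ := gate_sub hT (hCconv W' h') (hCne W' h')
          (hCconv _ h₃) (hCne _ h₃) hsub v₀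
        have happ := gp_append hT hmem
        conv_rhs => rw [← happ]
        rw [getVert_append_left]
        exact hk'
      have e1 := key W h Set.inter_subset_left hk
      have e2 := key (Wk k) (hWkC k) Set.inter_subset_right (hWkd k)
      rw [hrdef]
      dsimp only
      rw [e2, e1]
    -- r is a ray
    have hray : IsRay T r := by
      constructor
      · intro k
        have h1 := rco (Wk (k+1)) (hWkC (k+1)) k (le_trans (Nat.le_succ k) (hWkd (k+1)))
        have h2 := rco (Wk (k+1)) (hWkC (k+1)) (k+1) (hWkd (k+1))
        rw [h1, h2]
        apply Walk.adj_getVert_succ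
        have := hWkd (k+1)
        rw [d] at this
        omega
      · intro a b hab
        have h1 : d hT v₀ (r a) = a := by
          rw [hrdef]
          exact d_getVert hT (gp_isPath hT _ _) (by rw [← d]; exact hWkd a)
        have h2 : d hT v₀ (r b) = b := by
          rw [hrdef]
          exact d_getVert hT (gp_isPath hT _ _) (by rw [← d]; exact hWkd b)
        rw [← h1, ← h2, hab]
    -- tail of r enters every member of the family
    have htail : ∀ W, ∀ h : isC W, ∀ k : ℕ,
        d hT v₀ (gate hT W (hCconv W h) (hCne W h) v₀) ≤ k → r k ∈ W := by
      intro W h k hk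
      have h₃ : isC (W ∩ Wk k) := hCinter _ _ h (hWkC k)
      obtain ⟨hmem, hadd⟩ := gate_sub hT (hCconv W h) (hCne W h)
        (hCconv _ h₃) (hCne _ h₃) Set.inter_subset_left v₀
      obtain ⟨hmem', hadd'⟩ := gate_sub hT (hCconv _ (hWkC k)) (hCne _ (hWkC k))
        (hCconv _ h₃) (hCne _ h₃) Set.inter_subset_right v₀
      have hk3 : k ≤ d hT v₀ (gate hT _ (hCconv _ h₃) (hCne _ h₃) v₀) := by
        have := hWkd k
        omega
      have hr3 := rco _ h₃ k hk3
      have happ := gp_append hT hmem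
      set a := gate hT _ (hCconv _ h₃) (hCne _ h₃) v₀
      set w := gate hT W (hCconv W h) (hCne W h) v₀
      have hgv : (gp hT v₀ a).getVert k = (gp hT w a).getVert (k - d hT v₀ w) := by
        conv_lhs => rw [← happ]
        rw [getVert_append_right _ _ (show (gp hT v₀ w).length ≤ k from hk)]
        rfl
      have hmem2 : (gp hT w a).getVert (k - d hT v₀ w) ∈ (gp hT w a).support :=
        getVert_mem_support _ _
      have : r k ∈ (gp hT w a).support := by rw [hr3, hgv]; exact hmem2
      exact hCconv W h w (gate_mem hT W _ _ v₀) a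
        (Set.inter_subset_left (gate_mem hT _ (hCconv _ h₃) (hCne _ h₃) v₀)) _ this
    -- conclude : G fixes the end of r
    apply hgd.1
    refine ⟨r, hray, ?_⟩
    intro h hh
    have hsray : IsRay T (fun n => h (r n)) := by
      constructor
      · intro k
        exact (hG h hh _ _).2 (hray.1 k)
      · intro a b hab
        exact hray.2 (h.injective hab)
    set R : Set V := Set.range r with hR
    have hcR : Conv hT R := ray_conv hT hray
    have hneR : R.Nonempty := ⟨r 0, 0, rfl⟩
    set u₀ : V := h v₀ with hu₀
    set c : V := gate hT R hcR hneR u₀ with hc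
    apply tail_lemma hT hray hsray (J := d hT u₀ c + 1)
    intro j hj
    -- the image family member
    set W : Set V := Wk j with hW
    set W' : Set V := (h : Equiv.Perm V) '' W with hW'
    have hW'C : isC W' := hCimage h hh W (hWkC j)
    -- gate of W' from u₀ is the image of the gate of W from v₀
    have hgateq : gate hT W' (hCconv W' hW'C) (hCne W' hW'C) u₀
        = h (gate hT W (hCconv W (hWkC j)) (hCne W (hWkC j)) v₀) := by
      have := gate_image hT h (hG h hh) (hCconv W (hWkC j)) (hCne W (hWkC j)) v₀
      exact this
    set γ := gate hT W (hCconv W (hWkC j)) (hCne W (hWkC j)) v₀ with hγ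
    set γ' := gate hT W' (hCconv W' hW'C) (hCne W' hW'C) u₀ with hγ'
    have hd' : j ≤ d hT u₀ γ' := by
      rw [hgateq, hu₀, d_map hT h (hG h hh)]
      exact hWkd j
    -- h (r j) is the j-th vertex of the geodesic from u₀ to γ'
    have hsj : h (r j) = (gp hT u₀ γ').getVert j := by
      rw [rco W (hWkC j) j (hWkd j), hgateq, hu₀]
      rw [← gp_map hT h (hG h hh)]; erw [getVert_map]
      rfl
    -- pick a point of R ∩ W'
    set k₀ := d hT v₀ (gate hT W' (hCconv W' hW'C) (hCne W' hW'C) v₀) with hk₀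
    have hyW' : r k₀ ∈ W' := htail W' hW'C k₀ (le_refl _)
    have hyR : r k₀ ∈ R := ⟨k₀, rfl⟩
    -- h (r j) lies on the geodesic from u₀ to r k₀
    have hstep1 : h (r j) ∈ (gp hT u₀ γ').support := by
      rw [hsj]; exact getVert_mem_support _ _
    have hstep2 : (gp hT u₀ γ').support ⊆ (gp hT u₀ (r k₀)).support :=
      gp_support_sub_left hT (gate_spec hT W' (hCconv W' hW'C) (hCne W' hW'C) u₀ _ hyW')
    have hstep3 : c ∈ (gp hT u₀ (r k₀)).support := gate_spec hT R hcR hneR u₀ _ hyR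
    have hmem := hstep2 hstep1
    rw [← gp_append hT hstep3, Walk.mem_support_append_iff] at hmem
    rcases hmem with hm | hm
    · exfalso
      have hle := d_le_of_mem hT hm
      have hdj : d hT u₀ (h (r j)) = j := by
        rw [hu₀, d_map hT h (hG h hh)]
        have : d hT v₀ (r j) = j := by
          rw [hrdef]
          exact d_getVert hT (gp_isPath hT _ _) (by rw [← d]; exact hWkd j)
        exact this
      omega
    · exact hcR c (gate_mem hT R hcR hneR u₀) (r k₀) hyR _ hm

end TreeAux

namespace TreeAux

variable {V : Type*} {T : SimpleGraph V}

lemma d_adj (hT : T.IsTree) {x y : V} (h : T.Adj x y) : d hT x y = 1 := by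
  have hpath : (Walk.cons h Walk.nil).IsPath := by
    rw [Walk.isPath_def]; simp [h.ne]
  rw [d, ← gp_eq hT _ hpath]; rfl

lemma d_symm (hT : T.IsTree) (x y : V) : d hT x y = d hT y x := by
  rw [d, d, ← gp_reverse hT x y, Walk.length_reverse]

lemma support_length_one {u v : V} (p : T.Walk u v) (h : p.length = 1) :
    p.support = [u, v] := by
  cases p with
  | nil => simp at h
  | cons ha q =>
    cases q with
    | nil => simp
    | cons hb q' => simp at h

lemma adj_positions (hT : T.IsTree) {u v : V} {p : T.Walk u v} (hp : p.IsPath) {x y : V}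
    (hx : x ∈ p.support) (hy : y ∈ p.support) (hadj : T.Adj x y) :
    ∃ t, t + 1 ≤ p.length ∧ ((p.getVert t = x ∧ p.getVert (t+1) = y) ∨
      (p.getVert t = y ∧ p.getVert (t+1) = x)) := by
  obtain ⟨t₁, ht₁, hgv₁⟩ := exists_getVert p hx
  obtain ⟨t₂, ht₂, hgv₂⟩ := exists_getVert p hy
  have hne : t₁ ≠ t₂ := by
    intro he
    rw [he, hgv₂] at hgv₁
    exact hadj.ne hgv₁.symm
  have hd1 : d hT x y = 1 := d_adj hT hadj
  rcases le_or_gt t₁ t₂ with hle | hlt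
  · have := d_getVert_getVert hT hp hle ht₂
    rw [hgv₁, hgv₂, hd1] at this
    have ht2 : t₂ = t₁ + 1 := by omega
    exact ⟨t₁, by omega, Or.inl ⟨hgv₁, by rw [← ht2]; exact hgv₂⟩⟩
  · have := d_getVert_getVert hT hp (le_of_lt hlt) ht₁
    rw [hgv₁, hgv₂] at this
    rw [d_symm hT] at hd1
    rw [hd1] at this
    have ht2 : t₁ = t₂ + 1 := by omega
    exact ⟨t₂, by omega, Or.inr ⟨hgv₂, by rw [← ht2]; exact hgv₁⟩⟩

end TreeAux

namespace TreeAux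

variable {V : Type*} {T : SimpleGraph V}

lemma line_exists (hT : T.IsTree) {ρ σ : ℕ → V} (hρ : IsRay T ρ) (hσ : IsRay T σ)
    (hdisj : ∀ i j, ρ i ≠ σ j) :
    ∃ b f : ℕ,
      (∀ i j, b ≤ i → f ≤ j → ∀ x, x ∈ (gp hT (ρ i) (σ j)).support ↔
        ((∃ t, b ≤ t ∧ t ≤ i ∧ x = ρ t) ∨ x ∈ (gp hT (ρ b) (σ f)).support ∨
          (∃ t, f ≤ t ∧ t ≤ j ∧ x = σ t))) ∧
      (∀ x ∈ (gp hT (ρ b) (σ f)).support,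
        (∀ t, x = ρ t → t = b) ∧ (∀ t, x = σ t → t = f)) := by
  set R : Set V := Set.range ρ with hR
  set S : Set V := Set.range σ with hS
  have hcR : Conv hT R := ray_conv hT hρ
  have hcS : Conv hT S := ray_conv hT hσ
  have hneR : R.Nonempty := ⟨ρ 0, 0, rfl⟩
  have hneS : S.Nonempty := ⟨σ 0, 0, rfl⟩
  have hdisjRS : ∀ x ∈ R, x ∉ S := by
    rintro x ⟨i, rfl⟩ ⟨j, hj⟩
    exact hdisj i j hj.symm
  have hdisjSR : ∀ x ∈ S, x ∉ R := by
    rintro x ⟨j, rfl⟩ ⟨i, hi⟩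
    exact hdisj i j hi
  -- the gate of R from points of S is constant
  set c : V := gate hT R hcR hneR (σ 0) with hcdef
  have hcconst : ∀ j, gate hT R hcR hneR (σ j) = c :=
    fun j => gate_const hT hcR hneR hcS hdisjSR ⟨j, rfl⟩ ⟨0, rfl⟩
  have hcR' : c ∈ R := gate_mem hT R hcR hneR (σ 0)
  obtain ⟨b, hb⟩ := hcR'
  -- the gate of S from c
  set e : V := gate hT S hcS hneS c with hedef
  have heS : e ∈ S := gate_mem hT S hcS hneS c
  obtain ⟨f, hf⟩ := heS
  refine ⟨b, f, ?_, ?_⟩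
  · intro i j hbi hfj x
    -- c is on the geodesic from σ j to ρ i, hence on the one from ρ i to σ j
    have hcmem : c ∈ (gp hT (ρ i) (σ j)).support := by
      apply mem_gp_symm hT
      rw [← hcconst j]
      exact gate_spec hT R hcR hneR (σ j) _ ⟨i, rfl⟩
    have hemem : e ∈ (gp hT c (σ j)).support := gate_spec hT S hcS hneS c _ ⟨j, rfl⟩
    have happ1 := gp_append hT hcmem
    have happ2 := gp_append hT hemem
    -- support of the first piece
    have hseg1 : ∀ y, y ∈ (gp hT (ρ i) c).support ↔ ∃ t, b ≤ t ∧ t ≤ i ∧ y = ρ t := by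
      intro y
      constructor
      · intro hy
        have := mem_gp_symm hT hy
        rw [← hb] at this
        rw [show i = b + (i - b) by omega] at this
        rw [mem_gp_ray_iff hT hρ] at this
        obtain ⟨k, hk, rfl⟩ := this
        exact ⟨b + k, by omega, by omega, rfl⟩
      · rintro ⟨t, hbt, hti, rfl⟩
        apply mem_gp_symm hT
        rw [← hb, show i = b + (i - b) by omega, mem_gp_ray_iff hT hρ]
        exact ⟨t - b, by omega, by congr 1; omega⟩
    have hseg3 : ∀ y, y ∈ (gp hT e (σ j)).support ↔ ∃ t, f ≤ t ∧ t ≤ j ∧ y = σ t := by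
      intro y
      constructor
      · intro hy
        rw [← hf, show j = f + (j - f) by omega, mem_gp_ray_iff hT hσ] at hy
        obtain ⟨k, hk, rfl⟩ := hy
        exact ⟨f + k, by omega, by omega, rfl⟩
      · rintro ⟨t, hft, htj, rfl⟩
        rw [← hf, show j = f + (j - f) by omega, mem_gp_ray_iff hT hσ]
        exact ⟨t - f, by omega, by congr 1; omega⟩
    constructor
    · intro hx
      rw [← happ1, Walk.mem_support_append_iff] at hx
      rcases hx with hx | hx
      · exact Or.inl ((hseg1 x).1 hx)
      · rw [← happ2, Walk.mem_support_append_iff] at hx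
        rcases hx with hx | hx
        · refine Or.inr (Or.inl ?_)
          rw [hb, hf]
          exact hx
        · exact Or.inr (Or.inr ((hseg3 x).1 hx))
    · intro hx
      rcases hx with hx | hx | hx
      · have := (hseg1 x).2 hx
        exact gp_support_sub_left hT hcmem this
      · rw [hb, hf] at hx
        have h2 : x ∈ (gp hT c (σ j)).support := gp_support_sub_left hT hemem hx
        exact gp_support_sub_right hT hcmem h2
      · have := (hseg3 x).2 hx
        have h2 : x ∈ (gp hT c (σ j)).support := gp_support_sub_right hT hemem this
        exact gp_support_sub_right hT hcmem h2
  · -- the bridge meets R only in c = ρ b and S only in e = σ f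
    intro x hx
    rw [hb, hf] at hx
    constructor
    · intro t hxt
      -- x ∈ bridge ∩ R ⇒ x = c
      have hxc : x = c := by
        -- bridge ⊆ geodesic from c to σ 0 ⊆ reverse geodesic σ 0 to c
        have hemem : e ∈ (gp hT c (σ 0)).support := gate_spec hT S hcS hneS c _ ⟨0, rfl⟩
        have h1 : x ∈ (gp hT c (σ 0)).support := gp_support_sub_left hT hemem hx
        have h2 : x ∈ (gp hT (σ 0) c).support := mem_gp_symm hT h1
        have h3 : x ∈ (gp hT (σ 0) (gate hT R hcR hneR (σ 0))).support := by
          rw [hcconst 0]; exact h2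
        have := gate_first_entry hT R hcR hneR (σ 0) h3 ⟨t, hxt.symm⟩
        rw [hcconst 0] at this
        exact this
      rw [hxc, ← hb] at hxt
      exact (hρ.2 hxt.symm).symm ▸ rfl
    · intro t hxt
      have hxe : x = e := gate_first_entry hT S hcS hneS c hx ⟨t, hxt.symm⟩
      rw [hxe, ← hf] at hxt
      exact (hσ.2 hxt.symm).symm ▸ rfl

end TreeAux

namespace TreeAux

variable {V : Type*} {T : SimpleGraph V}

lemma pos_adj (hT : T.IsTree) {u v : V} {p : T.Walk u v} (hp : p.IsPath) {s₁ s₂ : ℕ}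
    (h₁ : s₁ ≤ p.length) (h₂ : s₂ ≤ p.length)
    (hadj : T.Adj (p.getVert s₁) (p.getVert s₂)) : s₂ = s₁ + 1 ∨ s₁ = s₂ + 1 := by
  rcases le_or_gt s₁ s₂ with hle | hlt
  · have := d_getVert_getVert hT hp hle h₂
    rw [d_adj hT hadj] at this
    omega
  · have := d_getVert_getVert hT hp (le_of_lt hlt) h₁
    rw [d_symm hT, d_adj hT hadj] at this
    omega

lemma line_degree (hT : T.IsTree) {ρ σ : ℕ → V} (hρ : IsRay T ρ) (hσ : IsRay T σ)
    (hdisj : ∀ i j, ρ i ≠ σ j) {b f : ℕ}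
    (D1 : ∀ i j, b ≤ i → f ≤ j → ∀ x, x ∈ (gp hT (ρ i) (σ j)).support ↔
        ((∃ t, b ≤ t ∧ t ≤ i ∧ x = ρ t) ∨ x ∈ (gp hT (ρ b) (σ f)).support ∨
          (∃ t, f ≤ t ∧ t ≤ j ∧ x = σ t)))
    (D2 : ∀ x ∈ (gp hT (ρ b) (σ f)).support,
        (∀ t, x = ρ t → t = b) ∧ (∀ t, x = σ t → t = f))
    (huniv : ∀ x : V, (∃ t, b ≤ t ∧ x = ρ t) ∨ x ∈ (gp hT (ρ b) (σ f)).support ∨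
        (∃ t, f ≤ t ∧ x = σ t))
    (v : V) : (T.neighborSet v).ncard = 2 := by
  -- dimensions for v
  obtain ⟨iv, jv, hiv, hjv, hvform⟩ :
      ∃ iv jv, b ≤ iv ∧ f ≤ jv ∧ ((∃ t, b ≤ t ∧ t ≤ iv ∧ v = ρ t) ∨
        v ∈ (gp hT (ρ b) (σ f)).support ∨ (∃ t, f ≤ t ∧ t ≤ jv ∧ v = σ t)) := by
    rcases huniv v with ⟨t, hbt, rfl⟩ | hv | ⟨t, hft, rfl⟩
    · exact ⟨t, f, hbt, le_refl _, Or.inl ⟨t, hbt, le_refl _, rfl⟩⟩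
    · exact ⟨b, f, le_refl _, le_refl _, Or.inr (Or.inl hv)⟩
    · exact ⟨b, t, le_refl _, hft, Or.inr (Or.inr ⟨t, hft, le_refl _, rfl⟩)⟩
  set I := iv + 1 with hI
  set J := jv + 1 with hJ
  set Q := gp hT (ρ I) (σ J) with hQ
  have hQpath := gp_isPath hT (ρ I) (σ J)
  have hbI : b ≤ I := by omega
  have hfJ : f ≤ J := by omega
  have hvQ : v ∈ Q.support := by
    rw [hQ, D1 I J hbI hfJ]
    rcases hvform with ⟨t, h1, h2, h3⟩ | hv | ⟨t, h1, h2, h3⟩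
    · exact Or.inl ⟨t, h1, by omega, h3⟩
    · exact Or.inr (Or.inl hv)
    · exact Or.inr (Or.inr ⟨t, h1, by omega, h3⟩)
  have hvne1 : v ≠ ρ I := by
    rcases hvform with ⟨t, h1, h2, h3⟩ | hv | ⟨t, h1, h2, h3⟩
    · intro he; have := hρ.2 (h3 ▸ he : ρ t = ρ I); omega
    · intro he; have := (D2 v hv).1 I he; omega
    · intro he; exact hdisj I t (by rw [← he, h3])
  have hvne2 : v ≠ σ J := by
    rcases hvform with ⟨t, h1, h2, h3⟩ | hv | ⟨t, h1, h2, h3⟩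
    · intro he; exact hdisj t J (h3 ▸ he)
    · intro he; have := (D2 v hv).2 J he; omega
    · intro he; have := hσ.2 (h3 ▸ he : σ t = σ J); omega
  obtain ⟨t₀, ht₀len, ht₀⟩ := exists_getVert Q hvQ
  have ht₀pos : 0 < t₀ := by
    rcases Nat.eq_zero_or_pos t₀ with h | h
    · exfalso; apply hvne1; rw [← ht₀, h, Walk.getVert_zero]
    · exact h
  have ht₀lt : t₀ < Q.length := by
    rcases lt_or_eq_of_le ht₀len with h | h
    · exact h
    · exfalso; apply hvne2; rw [← ht₀, h, Walk.getVert_length]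
  set nb₁ := Q.getVert (t₀ - 1) with hnb₁
  set nb₂ := Q.getVert (t₀ + 1) with hnb₂
  have hadj₁ : T.Adj nb₁ v := by
    have := Q.adj_getVert_succ (i := t₀ - 1) (by omega)
    rwa [show t₀ - 1 + 1 = t₀ by omega, ht₀] at this
  have hadj₂ : T.Adj v nb₂ := by
    have := Q.adj_getVert_succ (i := t₀) ht₀lt
    rwa [ht₀] at this
  have hnbne : nb₁ ≠ nb₂ := by
    intro he
    have := getVert_inj hT hQpath (by omega : t₀ - 1 ≤ Q.length) (by omega : t₀ + 1 ≤ Q.length) he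
    omega
  -- every neighbour of v is in the support of Q
  have hnbr_in : ∀ u, T.Adj v u → u ∈ Q.support := by
    intro u hadj
    rcases huniv u with ⟨t, hbt, rfl⟩ | hu | ⟨t, hft, rfl⟩
    · -- u = ρ t ; show t ≤ I
      have htI : t ≤ I := by
        rcases hvform with ⟨x, hx1, hx2, rfl⟩ | hv | ⟨y, hy1, hy2, rfl⟩
        · rcases ray_adj_index hT hρ hadj with h | h <;> omega
        · -- v in the bridge
          set i' := max t b with hi'
          set P := gp hT (ρ i') (σ f) with hP
          have hPpath := gp_isPath hT (ρ i') (σ f)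
          have hbi' : b ≤ i' := le_max_right _ _
          have huP : ρ t ∈ P.support := by
            rw [hP, D1 i' f hbi' (le_refl _)]
            exact Or.inl ⟨t, hbt, le_max_left _ _, rfl⟩
          have hvP : v ∈ P.support := by
            rw [hP, D1 i' f hbi' (le_refl _)]
            exact Or.inr (Or.inl hv)
          have hbP : ρ b ∈ P.support := by
            rw [hP, D1 i' f hbi' (le_refl _)]
            exact Or.inl ⟨b, le_refl _, hbi', rfl⟩
          -- positions
          obtain ⟨pu, hpulen, hpu⟩ := exists_getVert P huP
          obtain ⟨pv, hpvlen, hpv⟩ := exists_getVert P hvP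
          have hpue : pu + t = i' := by
            have h1 : d hT (ρ i') (ρ t) = pu := by
              rw [← hpu]; exact (d_getVert hT hPpath hpulen)
            have h2 : d hT (ρ i') (ρ t) = i' - t := by
              have h3 := d_ray hT hρ t (i' - t)
              rw [show t + (i' - t) = i' by omega] at h3
              rw [d_symm hT]; exact h3
            omega
          -- pv ≥ i' - b
          have hpvge : pv + b ≥ i' := by
            by_contra hcon
            push_neg at hcon
            have happ := gp_append hT hbP
            have hlen1 : (gp hT (ρ i') (ρ b)).length = i' - b := by
              have h3 := d_ray hT hρ b (i' - b)
              rw [show b + (i' - b) = i' by omega] at h3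
              rw [← d, d_symm hT]; exact h3
            have hgvP : P.getVert pv = (gp hT (ρ i') (ρ b)).getVert pv := by
              conv_lhs => rw [hP, ← happ]
              rw [getVert_append_left _ _ (by omega)]
            have hvmem : v ∈ (gp hT (ρ i') (ρ b)).support := by
              rw [← hpv, hgvP]
              exact getVert_mem_support _ _
            have hvmem' : v ∈ (gp hT (ρ b) (ρ i')).support := mem_gp_symm hT hvmem
            rw [show i' = b + (i' - b) by omega, mem_gp_ray_iff hT hρ] at hvmem'
            obtain ⟨x, hx, hvx⟩ := hvmem'
            have hbx := (D2 v hv).1 (b + x) hvx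
            have hvb : v = ρ b := by rw [hvx, hbx]
            have hdpv : d hT (ρ i') v = i' - b := by
              rw [hvb]
              have h3 := d_ray hT hρ b (i' - b)
              rw [show b + (i' - b) = i' by omega] at h3
              rw [d_symm hT]; exact h3
            have hdpv2 : d hT (ρ i') v = pv := by
              rw [← hpv]; exact d_getVert hT hPpath hpvlen
            omega
          have hdiff := pos_adj hT hPpath hpvlen hpulen (by rw [hpv, hpu]; exact hadj)
          omega
        · -- v = σ y, u = ρ t : single edge from σ-side to ρ-side
          set P := gp hT (ρ t) (σ y) with hP
          have hlen : P.length = 1 := by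
            rw [hP, ← d, d_symm hT]
            exact d_adj hT hadj
          have hsup : P.support = [ρ t, σ y] := support_length_one P hlen
          have hbP : ρ b ∈ P.support := by
            rw [hP, D1 t y hbt hy1]
            exact Or.inl ⟨b, le_refl _, hbt, rfl⟩
          rw [hsup] at hbP
          rcases List.mem_pair.1 hbP with h | h
          · have := hρ.2 h; omega
          · exact absurd h (hdisj b y)
      rw [hQ, D1 I J hbI hfJ]
      exact Or.inl ⟨t, hbt, htI, rfl⟩
    · rw [hQ, D1 I J hbI hfJ]
      exact Or.inr (Or.inl hu)
    · -- u = σ t ; show t ≤ J (mirror)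
      have htJ : t ≤ J := by
        rcases hvform with ⟨x, hx1, hx2, rfl⟩ | hv | ⟨y, hy1, hy2, rfl⟩
        · -- v = ρ x, u = σ t
          set P := gp hT (ρ x) (σ t) with hP
          have hlen : P.length = 1 := by
            rw [hP, ← d]
            exact d_adj hT hadj
          have hsup : P.support = [ρ x, σ t] := support_length_one P hlen
          have hfP : σ f ∈ P.support := by
            rw [hP, D1 x t hx1 hft]
            exact Or.inr (Or.inr ⟨f, le_refl _, hft, rfl⟩)
          rw [hsup] at hfP
          rcases List.mem_pair.1 hfP with h | h
          · exact absurd h.symm (hdisj x f)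
          · have := hσ.2 h; omega
        · -- v in the bridge, u = σ t
          set j' := max t f with hj'
          set P := gp hT (ρ b) (σ j') with hP
          have hPpath := gp_isPath hT (ρ b) (σ j')
          have hfj' : f ≤ j' := le_max_right _ _
          have hP'path := gp_isPath hT (σ j') (ρ b)
          have huP : σ t ∈ (gp hT (σ j') (ρ b)).support := by
            apply mem_gp_symm hT
            rw [D1 b j' (le_refl _) hfj']
            exact Or.inr (Or.inr ⟨t, hft, le_max_left _ _, rfl⟩)
          have hvP : v ∈ (gp hT (σ j') (ρ b)).support := by
            apply mem_gp_symm hT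
            rw [D1 b j' (le_refl _) hfj']
            exact Or.inr (Or.inl hv)
          have hfP : σ f ∈ (gp hT (σ j') (ρ b)).support := by
            apply mem_gp_symm hT
            rw [D1 b j' (le_refl _) hfj']
            exact Or.inr (Or.inr ⟨f, le_refl _, hfj', rfl⟩)
          obtain ⟨pu, hpulen, hpu⟩ := exists_getVert _ huP
          obtain ⟨pv, hpvlen, hpv⟩ := exists_getVert _ hvP
          have hpue : pu + t = j' := by
            have h1 : d hT (σ j') (σ t) = pu := by
              rw [← hpu]; exact (d_getVert hT hP'path hpulen)
            have h2 : d hT (σ j') (σ t) = j' - t := by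
              have h3 := d_ray hT hσ t (j' - t)
              rw [show t + (j' - t) = j' by omega] at h3
              rw [d_symm hT]; exact h3
            omega
          have hpvge : pv + f ≥ j' := by
            by_contra hcon
            push_neg at hcon
            have happ := gp_append hT hfP
            have hlen1 : (gp hT (σ j') (σ f)).length = j' - f := by
              have h3 := d_ray hT hσ f (j' - f)
              rw [show f + (j' - f) = j' by omega] at h3
              rw [← d, d_symm hT]; exact h3
            have hgvP : (gp hT (σ j') (ρ b)).getVert pv
                = (gp hT (σ j') (σ f)).getVert pv := by
              conv_lhs => rw [← happ]
              rw [getVert_append_left _ _ (by omega)]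
            have hvmem : v ∈ (gp hT (σ j') (σ f)).support := by
              rw [← hpv, hgvP]
              exact getVert_mem_support _ _
            have hvmem' : v ∈ (gp hT (σ f) (σ j')).support := mem_gp_symm hT hvmem
            rw [show j' = f + (j' - f) by omega, mem_gp_ray_iff hT hσ] at hvmem'
            obtain ⟨x, hx, hvx⟩ := hvmem'
            have hfx := (D2 v hv).2 (f + x) hvx
            have hvf : v = σ f := by rw [hvx, hfx]
            have hdpv : d hT (σ j') v = j' - f := by
              rw [hvf]
              have h3 := d_ray hT hσ f (j' - f)
              rw [show f + (j' - f) = j' by omega] at h3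
              rw [d_symm hT]; exact h3
            have hdpv2 : d hT (σ j') v = pv := by
              rw [← hpv]; exact d_getVert hT hP'path hpvlen
            omega
          have hdiff := pos_adj hT hP'path hpvlen hpulen (by rw [hpv, hpu]; exact hadj)
          omega
        · rcases ray_adj_index hT hσ hadj with h | h <;> omega
      rw [hQ, D1 I J hbI hfJ]
      exact Or.inr (Or.inr ⟨t, hft, htJ, rfl⟩)
  -- hence the neighbours of v are exactly nb₁ and nb₂
  have hset : T.neighborSet v = {nb₁, nb₂} := by
    ext u
    simp only [SimpleGraph.mem_neighborSet, Set.mem_insert_iff, Set.mem_singleton_iff]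
    constructor
    · intro hadj
      have huQ := hnbr_in u hadj
      obtain ⟨t₁, ht₁len, ht₁⟩ := exists_getVert Q huQ
      have hdiff := pos_adj hT hQpath ht₀len ht₁len (by rw [ht₀, ht₁]; exact hadj)
      rcases hdiff with h | h
      · right; rw [← ht₁, hnb₂, ← h]
      · left; rw [← ht₁, hnb₁, h, Nat.add_sub_cancel]
    · intro h
      rcases h with rfl | rfl
      · exact hadj₁.symm
      · exact hadj₂
  rw [hset]
  exact Set.ncard_pair hnbne

end TreeAux

namespace TreeAux

variable {V : Type*} {T : SimpleGraph V}

lemma rayEquiv_symm {r s : ℕ → V} (h : RayEquiv r s) : RayEquiv s r := by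
  obtain ⟨m, n, hmn⟩ := h
  exact ⟨n, m, fun i => (hmn i).symm⟩

lemma main1 {T : SimpleGraph V} (hT : T.IsTree) (hline : NotLine T)
    (G : Subgroup (Equiv.Perm V)) (hG : ∀ g ∈ G, IsTreeAut T g)
    (hgd : GeomDense T (G : Set (Equiv.Perm V)))
    (N : Subgroup (Equiv.Perm V)) (hN : ∀ n ∈ N, IsTreeAut T n) (hNnt : N ≠ ⊥)
    (hnorm : ∀ g ∈ G, ∀ n ∈ N, g * n * g⁻¹ ∈ N) :
    ¬ ∃ r : ℕ → V, IsRay T r ∧ ∀ n ∈ N, RayEquiv (fun k => n (r k)) r := by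
  rintro ⟨r, hr, hfix⟩
  by_cases hall : ∀ g ∈ G, RayEquiv (fun k => g (r k)) r
  · exact hgd.1 ⟨r, hr, fun g hg => hall g hg⟩
  push_neg at hall
  obtain ⟨h, hh, hneq⟩ := hall
  set s : ℕ → V := fun k => h (r k) with hsdef
  have hs : IsRay T s := by
    constructor
    · intro k; exact (hG h hh _ _).2 (hr.1 k)
    · intro a c hac; exact hr.2 (h.injective hac)
  have hsfix : ∀ n ∈ N, RayEquiv (fun k => n (s k)) s := by
    intro n hn
    have hmem : h⁻¹ * n * h ∈ N := by
      have := hnorm h⁻¹ (inv_mem hh) n hn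
      simpa using this
    obtain ⟨m, k, hmk⟩ := hfix _ hmem
    refine ⟨m, k, fun i => ?_⟩
    have h2 := congrArg h (hmk i)
    simp only [Equiv.Perm.mul_apply] at h2
    simpa [hsdef, Equiv.Perm.mul_apply] using h2
  have hneq2 : ¬ RayEquiv s r := hneq
  -- disjoint tails
  have hJ : ∃ J, ∀ j, J ≤ j → s j ∉ Set.range r := by
    by_contra hc
    push_neg at hc
    exact hneq2 (hits_to_tail hT hr hs (fun X => by
      obtain ⟨j, hj1, hj2⟩ := hc X
      exact ⟨j, hj1, hj2⟩))
  have hI : ∃ I, ∀ i, I ≤ i → r i ∉ Set.range s := by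
    by_contra hc
    push_neg at hc
    exact hneq2 (rayEquiv_symm (hits_to_tail hT hs hr (fun X => by
      obtain ⟨i, hi1, hi2⟩ := hc X
      exact ⟨i, hi1, hi2⟩)))
  obtain ⟨I, hItail⟩ := hI
  obtain ⟨J, hJtail⟩ := hJ
  set ρ : ℕ → V := fun t => r (I + t) with hρdef
  set σ : ℕ → V := fun t => s (J + t) with hσdef
  have hρ : IsRay T ρ := by
    constructor
    · intro k; exact hr.1 (I + k)
    · intro a c hac
      have := hr.2 hac
      omega
  have hσ : IsRay T σ := by
    constructor
    · intro k; exact hs.1 (J + k)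
    · intro a c hac
      have := hs.2 hac
      omega
  have hdisj : ∀ i j, ρ i ≠ σ j := by
    intro i j he
    exact hItail (I + i) (by omega) ⟨J + j, he.symm⟩
  obtain ⟨b, f, D1, D2⟩ := line_exists hT hρ hσ hdisj
  set L : Set V :=
    {x | ∀ X : ℕ, ∃ i, X ≤ i ∧ ∃ j, X ≤ j ∧ x ∈ (gp hT (ρ i) (σ j)).support} with hLdef
  have hmono : ∀ (x : V) i j i' j', b ≤ i → f ≤ j → i ≤ i' → j ≤ j' →
      x ∈ (gp hT (ρ i) (σ j)).support → x ∈ (gp hT (ρ i') (σ j')).support := by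
    intro x i j i' j' hbi hfj hii hjj hx
    rw [D1 i j hbi hfj] at hx
    rw [D1 i' j' (by omega) (by omega)]
    rcases hx with ⟨t, h1, h2, h3⟩ | hx | ⟨t, h1, h2, h3⟩
    · exact Or.inl ⟨t, h1, by omega, h3⟩
    · exact Or.inr (Or.inl hx)
    · exact Or.inr (Or.inr ⟨t, h1, by omega, h3⟩)
  have hLmem : ∀ x ∈ L, ∀ X : ℕ, ∃ i j, X ≤ i ∧ X ≤ j ∧ b ≤ i ∧ f ≤ j ∧
      x ∈ (gp hT (ρ i) (σ j)).support := by
    intro x hx X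
    obtain ⟨i, hi, j, hj, hmem⟩ := hx (max X (max b f))
    exact ⟨i, j, by omega, by omega, by omega, by omega, hmem⟩
  have hLEQ : ∀ x ∈ L, ((∃ t, b ≤ t ∧ x = ρ t) ∨ x ∈ (gp hT (ρ b) (σ f)).support ∨
      (∃ t, f ≤ t ∧ x = σ t)) := by
    intro x hx
    obtain ⟨i, j, _, _, hbi, hfj, hmem⟩ := hLmem x hx 0
    rw [D1 i j hbi hfj] at hmem
    rcases hmem with ⟨t, h1, _, h3⟩ | hm | ⟨t, h1, _, h3⟩
    · exact Or.inl ⟨t, h1, h3⟩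
    · exact Or.inr (Or.inl hm)
    · exact Or.inr (Or.inr ⟨t, h1, h3⟩)
  have hLne : L.Nonempty := by
    refine ⟨ρ b, fun X => ⟨max X b, le_max_left _ _, max X f, le_max_left _ _, ?_⟩⟩
    rw [D1 _ _ (le_max_right _ _) (le_max_right _ _)]
    exact Or.inl ⟨b, le_refl _, le_max_right _ _, rfl⟩
  have hLconv : Conv hT L := by
    intro x hx y hy w hw
    obtain ⟨i₁, j₁, _, _, hb₁, hf₁, hm₁⟩ := hLmem x hx 0
    obtain ⟨i₂, j₂, _, _, hb₂, hf₂, hm₂⟩ := hLmem y hy 0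
    set iS := max i₁ i₂ with histar
    set jS := max j₁ j₂ with hjstar
    have hx' := hmono x i₁ j₁ iS jS hb₁ hf₁ (le_max_left _ _) (le_max_left _ _) hm₁
    have hy' := hmono y i₂ j₂ iS jS hb₂ hf₂ (le_max_right _ _) (le_max_right _ _) hm₂
    have hw' : w ∈ (gp hT (ρ iS) (σ jS)).support := gp_support_conv hT hx' hy' hw
    intro X
    refine ⟨max X iS, le_max_left _ _, max X jS, le_max_left _ _, ?_⟩
    exact hmono w iS jS _ _ (by omega) (by omega) (le_max_right _ _) (le_max_right _ _) hw'
  have hLninv : Ninv N L := by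
    intro n hn x hx
    obtain ⟨m₁, k₁, he₁⟩ := hfix n hn
    obtain ⟨m₂, k₂, he₂⟩ := hsfix n hn
    intro X
    obtain ⟨i, j, hXi, hXj, hbi, hfj, hmem⟩ := hLmem x hx (X + m₁ + m₂)
    have h1 : n (ρ i) = ρ (k₁ + i - m₁) := by
      have h0 : n (r (m₁ + (I + i - m₁))) = r (k₁ + (I + i - m₁)) := he₁ (I + i - m₁)
      rw [show m₁ + (I + i - m₁) = I + i by omega] at h0
      show n (r (I + i)) = r (I + (k₁ + i - m₁))
      rw [h0]
      congr 1
      omega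
    have h2 : n (σ j) = σ (k₂ + j - m₂) := by
      have h0 : n (s (m₂ + (J + j - m₂))) = s (k₂ + (J + j - m₂)) := he₂ (J + j - m₂)
      rw [show m₂ + (J + j - m₂) = J + j by omega] at h0
      show n (s (J + j)) = s (J + (k₂ + j - m₂))
      rw [h0]
      congr 1
      omega
    have hmem' : n x ∈ (gp hT (n (ρ i)) (n (σ j))).support :=
      mem_gp_map hT n (hN n hn) hmem
    rw [h1, h2] at hmem'
    exact ⟨k₁ + i - m₁, by omega, k₂ + j - m₂, by omega, hmem'⟩
  by_cases hLu : L = Set.univ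
  · apply hline
    intro v
    exact line_degree hT hρ hσ hdisj D1 D2
      (fun x => hLEQ x (by rw [hLu]; exact Set.mem_univ x)) v
  · exact main2 hT G hG hgd N hN hNnt hnorm
      ⟨L, hLne, (isConvex_iff hT L).2 hLconv, hLu, hLninv⟩

end TreeAux

/-- A nontrivial subgroup of Aut(T) normalized by a geometrically dense group is itself
geometrically dense. -/
theorem normalized_subgroup_geomDense {V : Type*} [Countable V]
    (T : SimpleGraph V) (hT : T.IsTree) (hline : NotLine T)
    (G : Subgroup (Equiv.Perm V)) (hG : ∀ g ∈ G, IsTreeAut T g)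
    (hinv : ∀ g ∈ G, ¬ IsInversion T g)
    (hgd : GeomDense T (G : Set (Equiv.Perm V)))
    (N : Subgroup (Equiv.Perm V)) (hN : ∀ n ∈ N, IsTreeAut T n)
    (hNnt : N ≠ ⊥)
    (hnorm : ∀ g ∈ G, ∀ n ∈ N, g * n * g⁻¹ ∈ N) :
    GeomDense T (N : Set (Equiv.Perm V)) := by
  constructor
  · intro hcon
    apply TreeAux.main1 hT hline G hG hgd N hN hNnt hnorm
    obtain ⟨r, hr, hfix⟩ := hcon
    exact ⟨r, hr, fun n hn => hfix n hn⟩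
  · intro hcon
    apply TreeAux.main2 hT G hG hgd N hN hNnt hnorm
    obtain ⟨Y, h1, h2, h3, h4⟩ := hcon
    exact ⟨Y, h1, h2, h3, fun n hn v hv => h4 n hn v hv⟩
end

section
/- Let T_d be the d-regular tree with d ≥ 3, let l be a legal labelling of T_d, and let U^{(l)}({id}) be the group of automorphisms g of T_d with c(g,x) = id for every vertex x (the label-preserving automorphisms). Then U^{(l)}({id}) is isomorphic to the free product of d copies of ℤ/2ℤ, generated by the d label-respecting inversions of the edges at any fixed base vertex. -/
structure LegalLabelling {V : Type*} (T : SimpleGraph V) (d : ℕ) where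
  label : V → V → Fin d
  symm : ∀ u v : V, T.Adj u v → label u v = label v u
  inj : ∀ ⦃x u w : V⦄, T.Adj x u → T.Adj x w → label x u = label x w → u = w
  surj : ∀ (x : V) (i : Fin d), ∃ w : V, T.Adj x w ∧ label x w = i

/-- Membership in the Burger–Mozes universal group U^{(l)}(F). -/
def InU {V : Type*} {d : ℕ} (T : SimpleGraph V) (l : LegalLabelling T d)
    (F : Subgroup (Equiv.Perm (Fin d))) (g : Equiv.Perm V) : Prop :=
  IsTreeAut T g ∧
    ∀ x : V, ∃ a ∈ F, ∀ w : V, T.Adj x w → l.label (g x) (g w) = a (l.label x w)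

/-- The universal group U^{(l)}(F) as a subgroup of the permutations of the vertices. -/
def Usub {V : Type*} {d : ℕ} (T : SimpleGraph V) (l : LegalLabelling T d)
    (F : Subgroup (Equiv.Perm (Fin d))) : Subgroup (Equiv.Perm V) where
  carrier := {g | InU T l F g}
  one_mem' := ⟨fun _ _ => Iff.rfl, fun _ => ⟨1, one_mem F, fun _ _ => rfl⟩⟩
  mul_mem' := by
    rintro g h ⟨hg1, hg2⟩ ⟨hh1, hh2⟩
    refine ⟨fun u v => (hg1 (h u) (h v)).trans (hh1 u v), fun x => ?_⟩
    obtain ⟨a, ha, hag⟩ := hg2 (h x)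
    obtain ⟨c, hc, hch⟩ := hh2 x
    refine ⟨a * c, mul_mem ha hc, fun w hw => ?_⟩
    have hw' : T.Adj (h x) (h w) := (hh1 x w).mpr hw
    calc l.label (g (h x)) (g (h w)) = a (l.label (h x) (h w)) := hag (h w) hw'
      _ = a (c (l.label x w)) := by rw [hch w hw]
      _ = (a * c) (l.label x w) := rfl
  inv_mem' := by
    rintro g ⟨hg1, hg2⟩
    constructor
    · intro u v
      have h2 := hg1 (g⁻¹ u) (g⁻¹ v)
      rw [Equiv.Perm.coe_inv, Equiv.apply_symm_apply, Equiv.apply_symm_apply] at h2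
      exact h2.symm
    · intro x
      obtain ⟨a, ha, hag⟩ := hg2 (g⁻¹ x)
      refine ⟨a⁻¹, inv_mem ha, fun w hw => ?_⟩
      have hw' : T.Adj (g⁻¹ x) (g⁻¹ w) := by
        have h2 := hg1 (g⁻¹ x) (g⁻¹ w)
        rw [Equiv.Perm.coe_inv, Equiv.apply_symm_apply, Equiv.apply_symm_apply] at h2
        exact h2.mp hw
      have key := hag (g⁻¹ w) hw'
      rw [Equiv.Perm.coe_inv, Equiv.apply_symm_apply, Equiv.apply_symm_apply] at key
      rw [key, Equiv.Perm.coe_inv, Equiv.Perm.coe_inv, Equiv.symm_apply_apply]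

namespace BMaux

/-! ### Word combinatorics -/

section Words
variable {α : Type*} [DecidableEq α]

/-- Prepend a letter, with cancellation. -/
def consRed (i : α) : List α → List α
  | [] => [i]
  | j :: t => if i = j then t else i :: j :: t

/-- Append a letter, with cancellation. -/
def appRed (i : α) : List α → List α
  | [] => [i]
  | [j] => if j = i then [] else [j, i]
  | j :: k :: t => j :: appRed i (k :: t)

lemma appRed_cons (i j : α) {t : List α} (ht : t ≠ []) :
    appRed i (j :: t) = j :: appRed i t := by
  cases t with
  | nil => simp at ht
  | cons k s => rfl

lemma appRed_head (i j : α) (t : List α) :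
    appRed i (j :: t) = [] ∨ ∃ s, appRed i (j :: t) = j :: s := by
  cases t with
  | nil =>
    by_cases h : j = i
    · left; simp [appRed, h]
    · right; exact ⟨[i], by simp [appRed, h]⟩
  | cons k s => right; exact ⟨appRed i (k :: s), rfl⟩

lemma appRed_eq_nil_iff (i : α) (w : List α) : appRed i w = [] ↔ w = [i] := by
  cases w with
  | nil => simp [appRed]
  | cons j t =>
    cases t with
    | nil =>
      by_cases h : j = i <;> simp [appRed, h]
    | cons k s => simp [appRed]

lemma chain'_consRed {w : List α} (h : w.Chain' (· ≠ ·)) (i : α) :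
    (consRed i w).Chain' (· ≠ ·) := by
  cases w with
  | nil => simp [consRed, List.Chain']
  | cons j t =>
    by_cases hij : i = j
    · simpa [consRed, hij, List.Chain'] using h.tail
    · have he : consRed i (j :: t) = i :: j :: t := by simp [consRed, hij]
      rw [he]; refine List.isChain_cons_cons.mpr ?_
      exact ⟨hij, h⟩

lemma chain'_appRed {w : List α} (h : w.Chain' (· ≠ ·)) (i : α) :
    (appRed i w).Chain' (· ≠ ·) := by
  induction w with
  | nil => simp [appRed, List.Chain']
  | cons j t ih =>
    cases t with
    | nil =>
      by_cases hji : j = i <;> simp [appRed, hji, List.Chain']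
    | cons k s =>
      have h1 : j ≠ k := (List.isChain_cons_cons.mp h).1
      have h2 := ih h.tail
      rcases appRed_head i k s with h0 | ⟨s', hs'⟩
      · rw [show appRed i (j :: k :: s) = j :: appRed i (k :: s) from rfl, h0]
        simp [List.Chain']
      · rw [show appRed i (j :: k :: s) = j :: appRed i (k :: s) from rfl, hs']
        refine List.isChain_cons_cons.mpr ?_
        exact ⟨h1, hs' ▸ h2⟩

lemma appRed_appRed {w : List α} (h : w.Chain' (· ≠ ·)) (i : α) :
    appRed i (appRed i w) = w := by
  induction w with
  | nil => simp [appRed]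
  | cons j t ih =>
    cases t with
    | nil =>
      by_cases hji : j = i
      · simp [appRed, hji]
      · rw [show appRed i [j] = if j = i then [] else [j, i] from rfl, if_neg hji,
          appRed_cons i j (by simp)]
        simp [appRed]
    | cons k s =>
      have hne : appRed i (j :: k :: s) = j :: appRed i (k :: s) := rfl
      by_cases hu : appRed i (k :: s) = []
      · have hks : k :: s = [i] := (appRed_eq_nil_iff i _).mp hu
        have hjk : j ≠ k := (List.isChain_cons_cons.mp h).1
        have hk2 : k = i ∧ s = [] := by simpa using hks
        obtain ⟨rfl, rfl⟩ := hk2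
        rw [hne, hu]
        simp [appRed, hjk]
      · rw [hne, appRed_cons i j hu, ih h.tail]

lemma consRed_appRed (i j : α) (w : List α) :
    consRed i (appRed j w) = appRed j (consRed i w) := by
  cases w with
  | nil =>
    show consRed i [j] = appRed j [i]
    by_cases hij : i = j <;> simp [consRed, appRed, hij]
  | cons k t =>
    cases t with
    | nil =>
      by_cases hkj : k = j
      · subst hkj
        by_cases hik : i = k <;>
          simp [consRed, appRed, hik]
      · by_cases hik : i = k
        · subst hik
          simp [consRed, appRed, hkj]
        · simp [consRed, appRed, hkj, hik]
    | cons k' s =>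
      have hne : appRed j (k :: k' :: s) = k :: appRed j (k' :: s) := rfl
      by_cases hik : i = k
      · subst hik
        rw [hne, show consRed i (i :: k' :: s) = k' :: s from by simp [consRed]]
        show consRed i (i :: appRed j (k' :: s)) = appRed j (k' :: s)
        simp [consRed]
      · rw [hne]
        show consRed i (k :: appRed j (k' :: s)) = appRed j (consRed i (k :: k' :: s))
        rw [show consRed i (k :: k' :: s) = i :: k :: k' :: s from by simp [consRed, hik]]
        rw [show consRed i (k :: appRed j (k' :: s)) = i :: k :: appRed j (k' :: s) from by
          simp [consRed, hik]]
        rw [appRed_cons j i (by simp), hne]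

lemma appRed_of_getLast {i : α} {w : List α} (h : ∀ x ∈ w.getLast?, x ≠ i) :
    appRed i w = w ++ [i] := by
  induction w with
  | nil => rfl
  | cons j t ih =>
    cases t with
    | nil =>
      have : j ≠ i := h j (by simp)
      simp [appRed, this]
    | cons k s =>
      rw [show appRed i (j :: k :: s) = j :: appRed i (k :: s) from rfl,
        ih (by intro x hx; exact h x (by rwa [List.getLast?_cons_cons]))]
      rfl

end Words

end BMaux

namespace BMaux
section Tree

open SimpleGraph

variable {V : Type*} {T : SimpleGraph V} {d : ℕ}

/-- The neighbour of `x` in direction `i`. -/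
noncomputable def nbr (l : LegalLabelling T d) (x : V) (i : Fin d) : V :=
  (l.surj x i).choose

lemma nbr_adj (l : LegalLabelling T d) (x : V) (i : Fin d) : T.Adj x (nbr l x i) :=
  (l.surj x i).choose_spec.1

lemma nbr_label (l : LegalLabelling T d) (x : V) (i : Fin d) : l.label x (nbr l x i) = i :=
  (l.surj x i).choose_spec.2

lemma nbr_eq_of (l : LegalLabelling T d) {x w : V} (h : T.Adj x w) :
    nbr l x (l.label x w) = w :=
  l.inj (nbr_adj l x (l.label x w)) h (nbr_label l x (l.label x w))

lemma nbr_nbr (l : LegalLabelling T d) (x : V) (i : Fin d) : nbr l (nbr l x i) i = x := by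
  have h : T.Adj (nbr l x i) x := (nbr_adj l x i).symm
  have h2 : l.label (nbr l x i) x = i := by
    rw [← l.symm x (nbr l x i) (nbr_adj l x i)]
    exact nbr_label l x i
  have := nbr_eq_of l h
  rwa [h2] at this

/-- Follow the word `w` of labels starting from `b` (last letter first). -/
noncomputable def psi (l : LegalLabelling T d) (b : V) : List (Fin d) → V
  | [] => b
  | i :: t => nbr l (psi l b t) i

lemma psi_consRed (l : LegalLabelling T d) (b : V) (j : Fin d) (w : List (Fin d)) :
    psi l b (consRed j w) = nbr l (psi l b w) j := by
  cases w with
  | nil => rfl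
  | cons k t =>
    by_cases hjk : j = k
    · subst hjk
      show psi l b (consRed j (j :: t)) = _
      rw [show consRed j (j :: t) = t from by simp [consRed]]
      exact (nbr_nbr l (psi l b t) j).symm
    · rw [show consRed j (k :: t) = j :: k :: t from by simp [consRed, hjk]]
      rfl

/-- The walk from `psi l b w` back to `b`. -/
noncomputable def walkOf (l : LegalLabelling T d) (b : V) :
    (w : List (Fin d)) → T.Walk (psi l b w) b
  | [] => Walk.nil
  | i :: t => Walk.cons ((nbr_adj l (psi l b t) i).symm) (walkOf l b t)

/-- Read off the labels along a walk. -/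
def wordOfWalk (l : LegalLabelling T d) {u v : V} (p : T.Walk u v) : List (Fin d) :=
  p.darts.map fun e => l.label e.fst e.snd

lemma wordOf_walkOf (l : LegalLabelling T d) (b : V) (w : List (Fin d)) :
    wordOfWalk l (walkOf l b w) = w := by
  induction w with
  | nil => rfl
  | cons i t ih =>
    show (l.label (psi l b (i :: t)) (psi l b t)) :: wordOfWalk l (walkOf l b t) = i :: t
    rw [ih]
    congr 1
    have := l.symm (psi l b t) (psi l b (i :: t)) (nbr_adj l (psi l b t) i)
    rw [← this]
    exact nbr_label l (psi l b t) i

/-- In an acyclic graph, a vertex adjacent to the start of a path and different from the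
second vertex does not lie on the path. -/
lemma not_mem_support_of_acyclic {G : SimpleGraph V} (hG : G.IsAcyclic) {x y v : V}
    (p : G.Walk y v) (hp : p.IsPath) (hxy : G.Adj x y) (hsnd : x ≠ p.getVert 1) :
    x ∉ p.support := by
  classical
  intro hx
  have hxyne : x ≠ y := hxy.ne
  have hpe : s(x, y) ∉ p.edges := by
    intro he
    cases p with
    | nil => simp at he
    | cons h q =>
      rw [Walk.edges_cons] at he
      rcases List.mem_cons.mp he with h1 | h2
      · rw [Sym2.eq_iff] at h1
        rcases h1 with ⟨h1a, h1b⟩ | ⟨h1a, h1b⟩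
        · exact hxyne h1a
        · exact hsnd (by rw [show (1:ℕ) = 0 + 1 from rfl, Walk.getVert_cons_succ, Walk.getVert_zero]; exact h1a)
      · have hy : y ∈ q.support := q.snd_mem_support_of_mem_edges h2
        exact ((Walk.cons_isPath_iff _ _).mp hp).2 hy
  have hq : (p.takeUntil x hx).IsPath := hp.takeUntil hx
  have hedge : s(x, y) ∉ (p.takeUntil x hx).edges := fun he =>
    hpe (p.edges_takeUntil_subset hx he)
  exact hG _ ((Walk.cons_isCycle_iff _ hxy).mpr ⟨hq, hedge⟩)

lemma isPath_walkOf (hT : T.IsTree) (l : LegalLabelling T d) (b : V)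
    {w : List (Fin d)} (hw : w.Chain' (· ≠ ·)) : (walkOf l b w).IsPath := by
  induction w with
  | nil => exact Walk.IsPath.nil
  | cons i t ih =>
    show (Walk.cons _ (walkOf l b t)).IsPath
    refine (Walk.cons_isPath_iff _ _).mpr ?_
    refine ⟨ih hw.tail, ?_⟩
    apply not_mem_support_of_acyclic hT.2 (walkOf l b t) (ih hw.tail)
      ((nbr_adj l (psi l b t) i).symm)
    cases t with
    | nil =>
      show nbr l b i ≠ (Walk.nil : T.Walk b b).getVert 1
      exact (nbr_adj l b i).ne'
    | cons j s =>
      show nbr l (psi l b (j :: s)) i ≠ (Walk.cons _ (walkOf l b s)).getVert 1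
      suffices hs : nbr l (psi l b (j :: s)) i ≠ psi l b s from fun heq =>
        hs (heq.trans ((Walk.getVert_cons_succ (n := 0) _ _).trans (Walk.getVert_zero _)))
      intro heq
      have hij : i ≠ j := (List.isChain_cons_cons.mp hw).1
      apply hij
      have h1 : psi l b s = nbr l (psi l b (j :: s)) j :=
        (nbr_nbr l (psi l b s) j).symm
      calc i = l.label (psi l b (j :: s)) (nbr l (psi l b (j :: s)) i) :=
            (nbr_label l _ i).symm
        _ = l.label (psi l b (j :: s)) (nbr l (psi l b (j :: s)) j) := by
            rw [heq, h1]
        _ = j := nbr_label l _ j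

lemma psi_inj (hT : T.IsTree) (l : LegalLabelling T d) (b : V)
    {w w' : List (Fin d)} (hw : w.Chain' (· ≠ ·)) (hw' : w'.Chain' (· ≠ ·))
    (h : psi l b w = psi l b w') : w = w' := by
  have p1 : (walkOf l b w).IsPath := isPath_walkOf hT l b hw
  have p2 : ((walkOf l b w').copy h.symm rfl).IsPath := by
    rw [Walk.isPath_copy]
    exact isPath_walkOf hT l b hw'
  have hpq : (⟨walkOf l b w, p1⟩ : T.Path (psi l b w) b) =
      ⟨(walkOf l b w').copy h.symm rfl, p2⟩ :=
    hT.2.path_unique _ _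
  have hwalk : walkOf l b w = (walkOf l b w').copy h.symm rfl :=
    congrArg Subtype.val hpq
  calc w = wordOfWalk l (walkOf l b w) := (wordOf_walkOf l b w).symm
    _ = wordOfWalk l ((walkOf l b w').copy h.symm rfl) := by rw [hwalk]
    _ = wordOfWalk l (walkOf l b w') := by
        unfold wordOfWalk
        rw [Walk.darts_copy]
    _ = w' := wordOf_walkOf l b w'

lemma psi_surj (hT : T.IsTree) (l : LegalLabelling T d) (b : V) (v : V) :
    ∃ w : List (Fin d), w.Chain' (· ≠ ·) ∧ psi l b w = v := by
  obtain ⟨p⟩ : T.Reachable v b := hT.1.preconnected v b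
  induction p with
  | nil => exact ⟨[], List.isChain_nil, rfl⟩
  | cons h q ih =>
    rename_i u c _
    obtain ⟨w, hw, hpsi⟩ := ih
    refine ⟨consRed (l.label c u) w, chain'_consRed hw _, ?_⟩
    rw [psi_consRed, hpsi]
    exact nbr_eq_of l h.symm

end Tree
end BMaux

namespace BMaux
section Sigma

open SimpleGraph

variable {V : Type*} {T : SimpleGraph V} {d : ℕ}

/-- Reduced words. -/
abbrev Red (d : ℕ) := {w : List (Fin d) // w.Chain' (· ≠ ·)}

noncomputable def psiR (l : LegalLabelling T d) (b : V) : Red d → V := fun w => psi l b w.1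

lemma psiR_bij (hT : T.IsTree) (l : LegalLabelling T d) (b : V) :
    Function.Bijective (psiR l b) := by
  constructor
  · intro w w' h
    exact Subtype.ext (psi_inj hT l b w.2 w'.2 h)
  · intro v
    obtain ⟨w, hw, hpsi⟩ := psi_surj hT l b v
    exact ⟨⟨w, hw⟩, hpsi⟩

noncomputable def psiE (hT : T.IsTree) (l : LegalLabelling T d) (b : V) : Red d ≃ V :=
  Equiv.ofBijective _ (psiR_bij hT l b)

noncomputable def tauR (i : Fin d) : Equiv.Perm (Red d) :=
  Function.Involutive.toPerm (fun w => ⟨appRed i w.1, chain'_appRed w.2 i⟩)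
    (fun w => Subtype.ext (appRed_appRed w.2 i))

/-- The label-respecting inversion in direction `i` at base `b`. -/
noncomputable def sigma (hT : T.IsTree) (l : LegalLabelling T d) (b : V) (i : Fin d) :
    Equiv.Perm V :=
  ((psiE hT l b).symm.trans (tauR i)).trans (psiE hT l b)

lemma sigma_apply (hT : T.IsTree) (l : LegalLabelling T d) (b : V) (i : Fin d)
    (w : List (Fin d)) (hw : w.Chain' (· ≠ ·)) :
    sigma hT l b i (psi l b w) = psi l b (appRed i w) := by
  show psiE hT l b (tauR i ((psiE hT l b).symm (psiE hT l b ⟨w, hw⟩))) = _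
  rw [Equiv.symm_apply_apply]
  rfl

lemma sigma_invol (hT : T.IsTree) (l : LegalLabelling T d) (b : V) (i : Fin d) (v : V) :
    sigma hT l b i (sigma hT l b i v) = v := by
  obtain ⟨w, hw, rfl⟩ := psi_surj hT l b v
  rw [sigma_apply hT l b i w hw, sigma_apply hT l b i _ (chain'_appRed hw i),
    appRed_appRed hw]

lemma sigma_nbr (hT : T.IsTree) (l : LegalLabelling T d) (b : V) (i : Fin d) (v : V)
    (j : Fin d) : sigma hT l b i (nbr l v j) = nbr l (sigma hT l b i v) j := by
  obtain ⟨w, hw, rfl⟩ := psi_surj hT l b v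
  rw [← psi_consRed, sigma_apply hT l b i _ (chain'_consRed hw j),
    sigma_apply hT l b i w hw, ← psi_consRed, consRed_appRed]

lemma sigma_adj_label (hT : T.IsTree) (l : LegalLabelling T d) (b : V) (i : Fin d)
    {u v : V} (h : T.Adj u v) :
    T.Adj (sigma hT l b i u) (sigma hT l b i v) ∧
      l.label (sigma hT l b i u) (sigma hT l b i v) = l.label u v := by
  have hv : v = nbr l u (l.label u v) := (nbr_eq_of l h).symm
  rw [hv, sigma_nbr]
  exact ⟨nbr_adj l _ _, by rw [nbr_label, nbr_label]⟩

lemma sigma_mem (hT : T.IsTree) (l : LegalLabelling T d) (b : V) (i : Fin d) :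
    InU T l (⊥ : Subgroup (Equiv.Perm (Fin d))) (sigma hT l b i) := by
  constructor
  · intro u v
    constructor
    · intro h
      have := (sigma_adj_label hT l b i h).1
      rwa [sigma_invol, sigma_invol] at this
    · intro h
      exact (sigma_adj_label hT l b i h).1
  · intro x
    refine ⟨1, one_mem _, fun w hw => ?_⟩
    simpa using (sigma_adj_label hT l b i hw).2

lemma sigma_b (hT : T.IsTree) (l : LegalLabelling T d) (b : V) (i : Fin d) :
    sigma hT l b i b = nbr l b i := by
  have := sigma_apply hT l b i [] List.isChain_nil
  simpa [psi, appRed] using this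

lemma sigma_nbr_b (hT : T.IsTree) (l : LegalLabelling T d) (b : V) (i : Fin d) :
    sigma hT l b i (nbr l b i) = b := by
  have h1 : nbr l b i = psi l b [i] := rfl
  rw [h1, sigma_apply hT l b i [i] (List.isChain_singleton i)]
  simp [appRed, psi]

/-- Rigidity: a label-preserving automorphism fixing a vertex is the identity. -/
lemma rigid (hT : T.IsTree) (l : LegalLabelling T d) {g : Equiv.Perm V}
    (hg : InU T l (⊥ : Subgroup (Equiv.Perm (Fin d))) g) {x : V} (hx : g x = x) :
    ∀ v : V, g v = v := by
  have hlab : ∀ u w : V, T.Adj u w → l.label (g u) (g w) = l.label u w := by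
    intro u w hw
    obtain ⟨a, ha, h⟩ := hg.2 u
    have : a = 1 := Subgroup.mem_bot.mp ha
    subst this
    simpa using h w hw
  have step : ∀ u w : V, T.Adj u w → g u = u → g w = w := by
    intro u w huw hu
    have hadj : T.Adj (g u) (g w) := (hg.1 u w).mpr huw
    rw [hu] at hadj
    have : l.label u (g w) = l.label u w := by
      have := hlab u w huw
      rwa [hu] at this
    exact l.inj hadj huw this
  have walkstep : ∀ (u v : V) (_ : T.Walk u v), g u = u → g v = v := by
    intro u v p
    induction p with
    | nil => exact fun h => h
    | cons h q ih =>
      rename_i a c w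
      intro ha
      exact ih (step a c h ha)
  intro v
  obtain ⟨p⟩ : T.Reachable x v := hT.1.preconnected x v
  exact walkstep x v p hx

lemma mem_Usub {F : Subgroup (Equiv.Perm (Fin d))} {l : LegalLabelling T d}
    {g : Equiv.Perm V} : g ∈ Usub T l F ↔ InU T l F g := Iff.rfl

lemma eq_of_agree (hT : T.IsTree) (l : LegalLabelling T d) {g h : Equiv.Perm V}
    (hg : g ∈ Usub T l (⊥ : Subgroup (Equiv.Perm (Fin d))))
    (hh : h ∈ Usub T l (⊥ : Subgroup (Equiv.Perm (Fin d))))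
    {x : V} (hx : g x = h x) : g = h := by
  have hk : h⁻¹ * g ∈ Usub T l (⊥ : Subgroup (Equiv.Perm (Fin d))) :=
    mul_mem (inv_mem hh) hg
  have hkx : (h⁻¹ * g) x = x := by
    simp [Equiv.Perm.mul_apply, hx]
  have := rigid hT l (mem_Usub.mp hk) hkx
  ext v
  have hv := this v
  simp only [Equiv.Perm.mul_apply] at hv
  have := congrArg h hv
  rwa [Equiv.Perm.coe_inv, Equiv.apply_symm_apply] at this

lemma reach (hT : T.IsTree) (l : LegalLabelling T d) (b : V) (w : List (Fin d))
    (hw : w.Chain' (· ≠ ·)) :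
    ∃ g : Equiv.Perm V, g ∈ Subgroup.closure (Set.range (sigma hT l b)) ∧
      g b = psi l b w := by
  induction w using List.reverseRecOn with
  | nil => exact ⟨1, one_mem _, rfl⟩
  | append_singleton t i ih =>
    have ht : t.Chain' (· ≠ ·) := (List.isChain_append.mp hw).1
    have hlast : ∀ x ∈ t.getLast?, x ≠ i := by
      intro x hx
      exact (List.isChain_append.mp hw).2.2 x hx i (by simp)
    obtain ⟨g, hg, hb⟩ := ih ht
    refine ⟨sigma hT l b i * g, mul_mem (Subgroup.subset_closure ⟨i, rfl⟩) hg, ?_⟩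
    rw [Equiv.Perm.mul_apply, hb, sigma_apply hT l b i t ht, appRed_of_getLast hlast]

lemma closure_sigma_le (hT : T.IsTree) (l : LegalLabelling T d) (b : V) :
    Subgroup.closure (Set.range (sigma hT l b)) ≤
      Usub T l (⊥ : Subgroup (Equiv.Perm (Fin d))) := by
  rw [Subgroup.closure_le]
  rintro g ⟨i, rfl⟩
  exact mem_Usub.mpr (sigma_mem hT l b i)

end Sigma
end BMaux

namespace BMaux

/-- The homomorphism from `ℤ/2` determined by an element of square one. -/
def homOfSq {G : Type*} [Group G] (g : G) (hg : g * g = 1) :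
    Multiplicative (ZMod 2) →* G where
  toFun x := g ^ (Multiplicative.toAdd x).val
  map_one' := by
    show g ^ (0 : ZMod 2).val = 1
    simp [ZMod.val_zero]
  map_mul' x y := by
    have h2 : g ^ 2 = 1 := by rw [pow_two]; exact hg
    have key : ∀ n : ℕ, g ^ n = g ^ (n % 2) := by
      intro n
      conv_lhs => rw [← Nat.div_add_mod n 2]
      rw [pow_add, pow_mul, h2, one_pow, one_mul]
    show g ^ (Multiplicative.toAdd (x * y)).val = _
    rw [toAdd_mul, ZMod.val_add, ← key, pow_add]

lemma homOfSq_apply_ne_one {G : Type*} [Group G] (g : G) (hg : g * g = 1)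
    {h : Multiplicative (ZMod 2)} (hne : h ≠ 1) : homOfSq g hg h = g := by
  have hne' : Multiplicative.toAdd h ≠ 0 := by
    intro c
    apply hne
    rw [← ofAdd_toAdd h, c, ofAdd_zero]
  have h1 : Multiplicative.toAdd h = 1 := by
    revert hne'
    generalize Multiplicative.toAdd h = a
    revert a
    decide
  show g ^ (Multiplicative.toAdd h).val = g
  rw [h1, ZMod.val_one, pow_one]

end BMaux

open BMaux

/-- U^{(l)}({id}) is generated by the label-respecting inversions of the edges at any
fixed base vertex b, and is isomorphic to the free product ℤ/2 ∗ ⋯ ∗ ℤ/2 of d copies of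
ℤ/2ℤ. -/
theorem universal_group_trivial_F_free_product {V : Type*} (T : SimpleGraph V)
    (hT : T.IsTree) (d : ℕ) (hd : 3 ≤ d) (l : LegalLabelling T d) :
    (∀ b : V, Usub T l (⊥ : Subgroup (Equiv.Perm (Fin d))) =
      Subgroup.closure {σ : Equiv.Perm V |
        InU T l (⊥ : Subgroup (Equiv.Perm (Fin d))) σ ∧
        ∃ w : V, T.Adj b w ∧ σ b = w ∧ σ w = b}) ∧
    Nonempty (↥(Usub T l (⊥ : Subgroup (Equiv.Perm (Fin d)))) ≃*
      Monoid.CoprodI (fun _ : Fin d => Multiplicative (ZMod 2))) := by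
  constructor
  · -- generation statement
    intro b
    apply le_antisymm
    · -- Usub ≤ closure S_b
      intro u hu
      obtain ⟨w, hw, hpsi⟩ := psi_surj hT l b (u b)
      obtain ⟨g, hg, hgb⟩ := reach hT l b w hw
      have hgU : g ∈ Usub T l (⊥ : Subgroup (Equiv.Perm (Fin d))) :=
        closure_sigma_le hT l b hg
      have hug : u = g := eq_of_agree hT l hu hgU (by rw [hgb, hpsi])
      rw [hug]
      refine Subgroup.closure_mono ?_ hg
      rintro σ ⟨i, rfl⟩
      exact ⟨sigma_mem hT l b i, nbr l b i, nbr_adj l b i, sigma_b hT l b i,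
        sigma_nbr_b hT l b i⟩
    · -- closure S_b ≤ Usub
      rw [Subgroup.closure_le]
      intro σ hσ
      exact mem_Usub.mpr hσ.1
  · -- the isomorphism
    obtain ⟨b⟩ : Nonempty V := hT.1.nonempty
    set U := Usub T l (⊥ : Subgroup (Equiv.Perm (Fin d))) with hU
    have hmem : ∀ i, sigma hT l b i ∈ U := fun i => mem_Usub.mpr (sigma_mem hT l b i)
    set sigmaU : Fin d → ↥U := fun i => ⟨sigma hT l b i, hmem i⟩ with hsigmaU
    have hsq : ∀ i, sigmaU i * sigmaU i = 1 := by
      intro i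
      apply Subtype.ext
      ext v
      exact sigma_invol hT l b i v
    set f : ∀ _ : Fin d, Multiplicative (ZMod 2) →* ↥U :=
      fun i => homOfSq (sigmaU i) (hsq i) with hf
    set φ := Monoid.CoprodI.lift f with hφ
    haveI : Nontrivial (Fin d) :=
      ⟨⟨0, by omega⟩, ⟨1, by omega⟩, by simp [Fin.ext_iff]⟩
    -- injectivity via ping pong
    have hinj : Function.Injective φ := by
      apply Monoid.CoprodI.lift_injective_of_ping_pong f
        (Or.inl (by rw [Cardinal.mk_fin]; exact_mod_cast hd))
        (fun i => {v : V | ∃ w : List (Fin d), w.Chain' (· ≠ ·) ∧ psi l b w = v ∧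
          w.getLast? = some i})
      · intro i
        exact ⟨psi l b [i], [i], List.isChain_singleton i, rfl, rfl⟩
      · intro i j hij
        rw [Function.onFun, Set.disjoint_left]
        rintro v ⟨w, hw, hpsi, hlast⟩ ⟨w', hw', hpsi', hlast'⟩
        apply hij
        have : w = w' := psi_inj hT l b hw hw' (by rw [hpsi, hpsi'])
        rw [this, hlast'] at hlast
        exact (Option.some_injective _ hlast).symm
      · intro i j hij
        intro h hne
        rintro v ⟨x, ⟨w, hw, rfl, hlast⟩, rfl⟩
        have hfh : f i h = sigmaU i := homOfSq_apply_ne_one _ _ hne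
        have hgl : ∀ x ∈ w.getLast?, x ≠ i := by
          intro x hx
          rw [hlast] at hx
          simp at hx
          subst hx
          exact fun c => hij c.symm
        show f i h • psi l b w ∈ _
        have hsmul : f i h • psi l b w = sigma hT l b i (psi l b w) := by
          rw [hfh]
          rfl
        rw [hsmul, sigma_apply hT l b i w hw, appRed_of_getLast hgl]
        exact ⟨w ++ [i], (appRed_of_getLast hgl) ▸ chain'_appRed hw i, rfl, by simp⟩
    -- surjectivity
    have hsurj : Function.Surjective φ := by
      intro u
      obtain ⟨w, hw, hpsi⟩ := psi_surj hT l b (u.1 b)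
      obtain ⟨g, hg, hgb⟩ := reach hT l b w hw
      have hgU : g ∈ U := closure_sigma_le hT l b hg
      have hug : u.1 = g := eq_of_agree hT l u.2 hgU (by rw [hgb, hpsi])
      have key : ∀ x (hx : x ∈ Subgroup.closure (Set.range (sigma hT l b)))
          (hxU : x ∈ U), ∃ y, φ y = ⟨x, hxU⟩ := by
        intro x hx
        induction hx using Subgroup.closure_induction with
        | mem x hxr =>
          obtain ⟨i, rfl⟩ := hxr
          intro hxU
          refine ⟨Monoid.CoprodI.of (i := i) (Multiplicative.ofAdd 1), ?_⟩
          rw [hφ, Monoid.CoprodI.lift_of]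
          apply Subtype.ext
          have : f i (Multiplicative.ofAdd 1) = sigmaU i :=
            homOfSq_apply_ne_one _ _ (by decide)
          rw [this]
        | one =>
          intro hxU
          exact ⟨1, by rw [map_one]; exact Subtype.ext rfl⟩
        | mul x y hx hy ihx ihy =>
          intro hxyU
          obtain ⟨a, ha⟩ := ihx (closure_sigma_le hT l b hx)
          obtain ⟨c, hc⟩ := ihy (closure_sigma_le hT l b hy)
          refine ⟨a * c, ?_⟩
          rw [map_mul, ha, hc]
          exact Subtype.ext rfl
        | inv x hx ihx =>
          intro hxU
          obtain ⟨a, ha⟩ := ihx (closure_sigma_le hT l b hx)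
          refine ⟨a⁻¹, ?_⟩
          rw [map_inv, ha]
          exact Subtype.ext rfl
      obtain ⟨y, hy⟩ := key g hg hgU
      exact ⟨y, by rw [hy]; exact Subtype.ext hug.symm⟩
    exact ⟨(MulEquiv.ofBijective φ ⟨hinj, hsurj⟩).symm⟩
end

section
/- Let F ≤ S_d and let l be a legal labelling of the d-regular tree T_d (d ≥ 3). Then U^{(l)}(F) acts transitively on the geometric edges of T_d if and only if F acts transitively on {1,…,d}. -/
theorem Equiv.Perm.inv_apply_self {α : Type*} (f : Equiv.Perm α) (x : α) : f⁻¹ (f x) = x :=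
  Equiv.symm_apply_apply f x

namespace BMAux

open SimpleGraph Walk

variable {V : Type*} {T : SimpleGraph V} {d : ℕ}

/-- The unique neighbour of `x` carrying label `i`. -/
noncomputable def nbr (l : LegalLabelling T d) (x : V) (i : Fin d) : V :=
  (l.surj x i).choose

lemma nbr_adj (l : LegalLabelling T d) (x : V) (i : Fin d) : T.Adj x (nbr l x i) :=
  (l.surj x i).choose_spec.1

lemma nbr_label (l : LegalLabelling T d) (x : V) (i : Fin d) : l.label x (nbr l x i) = i :=
  (l.surj x i).choose_spec.2

lemma nbr_eq (l : LegalLabelling T d) {x w : V} {i : Fin d} (h : T.Adj x w)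
    (hl : l.label x w = i) : nbr l x i = w :=
  l.inj (nbr_adj l x i) h (by rw [nbr_label, hl])

variable (l : LegalLabelling T d) (ρ ρ' : Fin d → Equiv.Perm (Fin d) → Equiv.Perm (Fin d))

/-- Development of a walk on the "image" side: given a walk from `y` to `x`, a starting
vertex `y'` and a starting local permutation `a`, produce the final vertex, the image walk
and the final local permutation.  At each step the local permutation is updated by `ρ`. -/
noncomputable def dev : ∀ {y x : V}, T.Walk y x → (y' : V) → Equiv.Perm (Fin d) →
    Σ x' : V, T.Walk y' x' × Equiv.Perm (Fin d)
  | _, _, .nil, y', a => ⟨y', .nil, a⟩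
  | _, _, @SimpleGraph.Walk.cons _ _ y w _ _h p, y', a =>
      let res := dev p (nbr l y' (a (l.label y w))) (ρ (l.label y w) a)
      ⟨res.1, .cons (nbr_adj l y' (a (l.label y w))) res.2.1, res.2.2⟩

@[simp] lemma dev_nil (y y' : V) (a : Equiv.Perm (Fin d)) :
    dev l ρ (.nil : T.Walk y y) y' a = ⟨y', .nil, a⟩ := rfl

lemma dev_cons {y w x : V} (h : T.Adj y w) (p : T.Walk w x) (y' : V) (a : Equiv.Perm (Fin d)) :
    dev l ρ (.cons h p) y' a =
      ⟨(dev l ρ p (nbr l y' (a (l.label y w))) (ρ (l.label y w) a)).1,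
       .cons (nbr_adj l y' (a (l.label y w)))
         (dev l ρ p (nbr l y' (a (l.label y w))) (ρ (l.label y w) a)).2.1,
       (dev l ρ p (nbr l y' (a (l.label y w))) (ρ (l.label y w) a)).2.2⟩ := rfl

/-- The unique path between two vertices of a tree. -/
noncomputable def pth (hT : T.IsTree) (y x : V) : T.Walk y x :=
  (((SimpleGraph.isTree_iff_existsUnique_path).mp hT).2 y x).choose

lemma pth_isPath (hT : T.IsTree) (y x : V) : (pth hT y x).IsPath :=
  (((SimpleGraph.isTree_iff_existsUnique_path).mp hT).2 y x).choose_spec.1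

lemma pth_eq (hT : T.IsTree) {y x : V} {r : T.Walk y x} (hr : r.IsPath) : r = pth hT y x :=
  (((SimpleGraph.isTree_iff_existsUnique_path).mp hT).2 y x).choose_spec.2 r hr

lemma dev_concat {y x : V} (p : T.Walk y x) {w : V} (h : T.Adj x w) (y' : V)
    (a : Equiv.Perm (Fin d)) :
    (dev l ρ (p.concat h) y' a).1 =
      nbr l (dev l ρ p y' a).1 ((dev l ρ p y' a).2.2 (l.label x w)) ∧
    (dev l ρ (p.concat h) y' a).2.2 = ρ (l.label x w) (dev l ρ p y' a).2.2 := by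
  induction p generalizing y' a with
  | nil => simp [Walk.concat_nil, dev_cons, dev_nil]
  | cons h' p ih => rw [Walk.concat_cons, dev_cons, dev_cons]; exact ih h _ _

lemma dev_mem {F : Subgroup (Equiv.Perm (Fin d))} (hρ : ∀ i a, a ∈ F → ρ i a ∈ F)
    {y x : V} (p : T.Walk y x) (y' : V) {a : Equiv.Perm (Fin d)} (ha : a ∈ F) :
    (dev l ρ p y' a).2.2 ∈ F := by
  induction p generalizing y' a with
  | nil => exact ha
  | cons h' p ih => rw [dev_cons]; exact ih _ (hρ _ _ ha)

lemma pth_adj (hT : T.IsTree) {u x w : V} (h : T.Adj x w) :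
    pth hT u w = (pth hT u x).concat h ∨ pth hT u x = (pth hT u w).concat h.symm := by
  classical
  by_cases hw : w ∈ (pth hT u x).support
  · right
    have h1 : (pth hT u x).takeUntil w hw = pth hT u w :=
      pth_eq hT ((pth_isPath hT u x).takeUntil hw)
    have e2 : (Walk.cons h.symm Walk.nil : T.Walk w x).IsPath := by
      simp [Walk.cons_isPath_iff, h.ne']
    have h2 : (pth hT u x).dropUntil w hw = Walk.cons h.symm Walk.nil :=
      (pth_eq hT ((pth_isPath hT u x).dropUntil hw)).trans (pth_eq hT e2).symm
    calc pth hT u x = ((pth hT u x).takeUntil w hw).append ((pth hT u x).dropUntil w hw) :=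
          (Walk.take_spec _ hw).symm
      _ = (pth hT u w).append (Walk.cons h.symm Walk.nil) := by rw [h1, h2]
      _ = (pth hT u w).concat h.symm := (Walk.concat_eq_append _ _).symm
  · left
    have : ((pth hT u x).concat h).IsPath := by
      rw [← Walk.isPath_reverse_iff, Walk.reverse_concat, Walk.cons_isPath_iff]
      exact ⟨(pth_isPath hT u x).reverse, by simpa [Walk.support_reverse] using hw⟩
    exact (pth_eq hT this).symm

lemma dev_inv (Hinv : ∀ (i : Fin d) (a : Equiv.Perm (Fin d)), ρ' (a i) a⁻¹ = (ρ i a)⁻¹)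
    {y x : V} (p : T.Walk y x) (y' : V) (a : Equiv.Perm (Fin d)) :
    (dev l ρ' (dev l ρ p y' a).2.1 y a⁻¹).1 = x ∧
    (dev l ρ' (dev l ρ p y' a).2.1 y a⁻¹).2.2 = ((dev l ρ p y' a).2.2)⁻¹ := by
  induction p generalizing y' a with
  | nil => simp
  | @cons y w x h p ih =>
    simp only [dev_cons]
    rw [nbr_label, Equiv.Perm.inv_apply_self, nbr_eq l h rfl, Hinv]
    exact ih _ _

lemma devW_isPath (hT : T.IsTree) (Hc : ∀ (i : Fin d) (a : Equiv.Perm (Fin d)), ρ i a i = a i)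
    {y x : V} (p : T.Walk y x) (hp : p.IsPath) (y' : V) (a : Equiv.Perm (Fin d)) :
    (dev l ρ p y' a).2.1.IsPath := by
  classical
  induction p generalizing y' a with
  | nil => exact Walk.IsPath.nil
  | @cons y w x h p ih =>
    have hq₀ : (dev l ρ p (nbr l y' (a (l.label y w))) (ρ (l.label y w) a)).2.1.IsPath :=
      ih hp.of_cons _ _
    simp only [dev_cons]
    rw [Walk.cons_isPath_iff]
    refine ⟨hq₀, fun hy' => ?_⟩
    clear ih
    cases p with
    | nil =>
      simp only [dev_nil, Walk.support_nil, List.mem_singleton] at hy'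
      exact (nbr_adj l y' (a (l.label y w))).ne hy'
    | @cons w z x h₀ p₁ =>
      set i := l.label y w with hidef
      set w' := nbr l y' (a i) with hw'def
      set b := ρ i a with hbdef
      set i₂ := l.label w z with hi₂def
      set q₀ := (dev l ρ (Walk.cons h₀ p₁) w' b).2.1 with hq₀def
      have hadj : T.Adj y' w' := nbr_adj l y' (a i)
      have hc : (q₀.takeUntil y' hy').IsPath := hq₀.takeUntil hy'
      have he : (Walk.cons hadj.symm Walk.nil : T.Walk w' y').IsPath := by
        simp [Walk.cons_isPath_iff, hadj.ne']
      have hce : q₀.takeUntil y' hy' = Walk.cons hadj.symm Walk.nil :=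
        (pth_eq hT hc).trans (pth_eq hT he).symm
      have hspec := q₀.take_spec hy'
      rw [hce] at hspec
      have h1 : q₀.getVert 1 = y' := by
        rw [← hspec]
        simp [Walk.getVert_cons_succ, Walk.getVert_zero]
      have h2 : q₀.getVert 1 = nbr l w' (b i₂) := by
        rw [hq₀def]
        simp only [dev_cons]
        simp [Walk.getVert_cons_succ, Walk.getVert_zero]
        rfl
      have e0 : nbr l w' (b i₂) = y' := h2.symm.trans h1
      have e1 : l.label w' y' = b i₂ := e0 ▸ nbr_label l w' (b i₂)
      have e2 : l.label w' y' = a i := (l.symm y' w' hadj).symm.trans (nbr_label l y' (a i))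
      have e3 : b i₂ = b i := e1.symm.trans (e2.trans (Hc i a).symm)
      have e4 : i₂ = i := b.injective e3
      have e5 : z = y := by
        refine l.inj h₀ h.symm ?_
        rw [← hi₂def, e4, hidef]
        exact l.symm y w h
      have : y ∉ (Walk.cons h₀ p₁).support := ((Walk.cons_isPath_iff _ _).mp hp).2
      apply this
      rw [← e5]
      simp [Walk.support_cons, Walk.start_mem_support]

lemma dev_adj (hT : T.IsTree) (Hc : ∀ (i : Fin d) (a : Equiv.Perm (Fin d)), ρ i a i = a i)
    (u y' : V) (a₀ : Equiv.Perm (Fin d)) {x w : V} (h : T.Adj x w) :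
    T.Adj (dev l ρ (pth hT u x) y' a₀).1 (dev l ρ (pth hT u w) y' a₀).1 ∧
    l.label (dev l ρ (pth hT u x) y' a₀).1 (dev l ρ (pth hT u w) y' a₀).1 =
      (dev l ρ (pth hT u x) y' a₀).2.2 (l.label x w) := by
  rcases pth_adj hT (u := u) h with hcase | hcase
  · rw [hcase]
    obtain ⟨hv, -⟩ := dev_concat l ρ (pth hT u x) h y' a₀
    rw [hv]
    exact ⟨nbr_adj _ _ _, nbr_label _ _ _⟩
  · rw [hcase]
    obtain ⟨hv, hperm⟩ := dev_concat l ρ (pth hT u w) h.symm y' a₀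
    rw [hperm, hv]
    have hadj := nbr_adj l (dev l ρ (pth hT u w) y' a₀).1
      ((dev l ρ (pth hT u w) y' a₀).2.2 (l.label w x))
    refine ⟨hadj.symm, ?_⟩
    rw [l.symm x w h, Hc, l.symm _ _ hadj.symm]
    exact nbr_label _ _ _

end BMAux

/-- U^{(l)}(F) is transitive on geometric edges iff F is transitive on {1,…,d}. -/
theorem universal_group_edge_transitive_iff {V : Type*} (T : SimpleGraph V)
    (hT : T.IsTree) (d : ℕ) (hd : 3 ≤ d) (l : LegalLabelling T d)
    (F : Subgroup (Equiv.Perm (Fin d))) :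
    (∀ u v u' v' : V, T.Adj u v → T.Adj u' v' →
      ∃ g : Equiv.Perm V, InU T l F g ∧
        ((g u = u' ∧ g v = v') ∨ (g u = v' ∧ g v = u'))) ↔
    (∀ i j : Fin d, ∃ a ∈ F, a i = j) := by
  classical
  constructor
  · -- edge transitivity implies transitivity of F on labels
    intro hL i j
    obtain ⟨x⟩ : Nonempty V := hT.isConnected.nonempty
    obtain ⟨wi, hwi, hli⟩ := l.surj x i
    obtain ⟨wj, hwj, hlj⟩ := l.surj x j
    obtain ⟨g, ⟨_, hloc⟩, hcase⟩ := hL x wi x wj hwi hwj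
    obtain ⟨a, haF, ha⟩ := hloc x
    refine ⟨a, haF, ?_⟩
    have hkey := ha wi hwi
    rw [hli] at hkey
    rcases hcase with ⟨h1, h2⟩ | ⟨h1, h2⟩
    · rw [h1, h2, hlj] at hkey
      exact hkey.symm
    · rw [h1, h2] at hkey
      rw [← hkey, ← l.symm x wj hwj, hlj]
  · -- transitivity of F on labels implies edge transitivity
    intro hF u v u' v' h h'
    open BMAux in
    -- choice of permutations realising transitivity
    let σ : Fin d → Fin d → Equiv.Perm (Fin d) := fun i j => (hF i j).choose
    have σmem : ∀ i j, σ i j ∈ F := fun i j => (hF i j).choose_spec.1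
    have σap : ∀ i j, σ i j i = j := fun i j => (hF i j).choose_spec.2
    let ρ : Fin d → Equiv.Perm (Fin d) → Equiv.Perm (Fin d) := fun i a => σ i (a i)
    let ρ' : Fin d → Equiv.Perm (Fin d) → Equiv.Perm (Fin d) := fun j c => (σ (c j) j)⁻¹
    have Hc : ∀ (i : Fin d) (a : Equiv.Perm (Fin d)), ρ i a i = a i := fun i a => σap i (a i)
    have Hc' : ∀ (j : Fin d) (c : Equiv.Perm (Fin d)), ρ' j c j = c j := by
      intro j c
      show (σ (c j) j)⁻¹ j = c j
      rw [Equiv.Perm.inv_def, Equiv.symm_apply_eq, σap]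
    have Hinv : ∀ (i : Fin d) (a : Equiv.Perm (Fin d)), ρ' (a i) a⁻¹ = (ρ i a)⁻¹ := by
      intro i a
      show (σ (a⁻¹ (a i)) (a i))⁻¹ = (σ i (a i))⁻¹
      rw [Equiv.Perm.inv_apply_self]
    have Hinv' : ∀ (j : Fin d) (c : Equiv.Perm (Fin d)), ρ (c j) c⁻¹ = (ρ' j c)⁻¹ := by
      intro j c
      show σ (c j) (c⁻¹ (c j)) = ((σ (c j) j)⁻¹)⁻¹
      rw [Equiv.Perm.inv_apply_self, inv_inv]
    have Hmem : ∀ (i : Fin d) (a : Equiv.Perm (Fin d)), a ∈ F → ρ i a ∈ F :=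
      fun i a _ => σmem _ _
    set a₀ : Equiv.Perm (Fin d) := σ (l.label u v) (l.label u' v') with ha₀def
    have ha₀F : a₀ ∈ F := σmem _ _
    have ha₀ : a₀ (l.label u v) = l.label u' v' := σap _ _
    let g : V → V := fun x => (dev l ρ (pth hT u x) u' a₀).1
    let g' : V → V := fun x => (dev l ρ' (pth hT u' x) u a₀⁻¹).1
    have hgg' : ∀ x, g' (g x) = x := by
      intro x
      have hq : (dev l ρ (pth hT u x) u' a₀).2.1.IsPath :=
        devW_isPath l ρ hT Hc _ (pth_isPath hT u x) u' a₀
      show (dev l ρ' (pth hT u' (g x)) u a₀⁻¹).1 = x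
      rw [← pth_eq hT hq]
      exact (dev_inv l ρ ρ' Hinv (pth hT u x) u' a₀).1
    have hg'g : ∀ x, g (g' x) = x := by
      intro x
      have hq : (dev l ρ' (pth hT u' x) u a₀⁻¹).2.1.IsPath :=
        devW_isPath l ρ' hT Hc' _ (pth_isPath hT u' x) u a₀⁻¹
      show (dev l ρ (pth hT u (g' x)) u' a₀).1 = x
      rw [← pth_eq hT hq]
      have := (dev_inv l ρ' ρ Hinv' (pth hT u' x) u a₀⁻¹).1
      rwa [inv_inv] at this
    refine ⟨⟨g, g', hgg', hg'g⟩, ⟨?_, ?_⟩, Or.inl ⟨?_, ?_⟩⟩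
    · -- tree automorphism
      intro x w
      constructor
      · intro hgxw
        have := (dev_adj l ρ' hT Hc' u' u a₀⁻¹ hgxw).1
        show T.Adj x w
        rw [← hgg' x, ← hgg' w]
        exact this
      · intro hxw
        exact (dev_adj l ρ hT Hc u u' a₀ hxw).1
    · -- local action in F
      intro x
      exact ⟨(dev l ρ (pth hT u x) u' a₀).2.2, dev_mem l ρ Hmem _ _ ha₀F,
        fun w hw => (dev_adj l ρ hT Hc u u' a₀ hw).2⟩
    · -- g u = u'
      show (dev l ρ (pth hT u u) u' a₀).1 = u'
      rw [← pth_eq hT (SimpleGraph.Walk.IsPath.nil : (SimpleGraph.Walk.nil : T.Walk u u).IsPath)]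
      rfl
    · -- g v = v'
      show (dev l ρ (pth hT u v) u' a₀).1 = v'
      have hpv : (SimpleGraph.Walk.cons h SimpleGraph.Walk.nil : T.Walk u v).IsPath := by
        simp [SimpleGraph.Walk.cons_isPath_iff, h.ne]
      rw [← pth_eq hT hpv]
      simp only [dev_cons, dev_nil]
      rw [ha₀]
      exact nbr_eq l h' rfl
end

section
/- Let F ≤ S_d be a transitive permutation group and let H ≤ Aut(T_d) (d ≥ 3) be vertex-transitive and locally permutation isomorphic to F, i.e., for every vertex x there is a bijection λ_x : E(x) → {1,…,d} such that the permutation group induced by the stabilizer of x in H on E(x) equals λ_x^{-1} ∘ F ∘ λ_x. Then there exists a legal labelling l of T_d such that H ≤ U^{(l)}(F). -/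
namespace BMUniv


variable {V : Type*} {T : SimpleGraph V}

open SimpleGraph

variable {V : Type*} {T : SimpleGraph V}

theorem isPath_concat {u v w : V} {p : T.Walk u v} (hp : p.IsPath) (h : T.Adj v w)
    (hw : w ∉ p.support) : (p.concat h).IsPath := by
  rw [← SimpleGraph.Walk.isPath_reverse_iff, SimpleGraph.Walk.reverse_concat]
  refine SimpleGraph.Walk.IsPath.cons hp.reverse ?_
  simpa [SimpleGraph.Walk.support_reverse] using hw

theorem dist_ne_of_adj (hT : T.IsTree) (x₀ : V) {u v : V} (h : T.Adj u v) :
    T.dist x₀ u ≠ T.dist x₀ v := by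
  classical
  intro he
  obtain ⟨P, hP, hPl⟩ := hT.isConnected.exists_path_of_dist x₀ u
  have hvP : v ∉ P.support := by
    intro hv
    have h1 : T.dist x₀ v ≤ (P.takeUntil v hv).length := SimpleGraph.dist_le _
    have h2 := congrArg SimpleGraph.Walk.length (P.take_spec hv)
    rw [SimpleGraph.Walk.length_append] at h2
    have h3 : (P.dropUntil v hv).length ≠ 0 := fun h0 =>
      h.ne' (SimpleGraph.Walk.eq_of_length_eq_zero h0)
    omega
  obtain ⟨Q, hQ, hQl⟩ := hT.isConnected.exists_path_of_dist x₀ v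
  have huniq := hT.IsAcyclic.path_unique ⟨P.concat h, isPath_concat hP h hvP⟩ ⟨Q, hQ⟩
  have hlen := congrArg (fun p : T.Path x₀ v => p.1.length) huniq
  simp only [SimpleGraph.Walk.length_concat] at hlen
  omega

theorem dist_adj (hT : T.IsTree) (x₀ : V) {u v : V} (h : T.Adj u v) :
    T.dist x₀ v = T.dist x₀ u + 1 ∨ T.dist x₀ u = T.dist x₀ v + 1 := by
  have h1 : T.dist x₀ v ≤ T.dist x₀ u + 1 := by
    calc T.dist x₀ v ≤ T.dist x₀ u + T.dist u v := hT.isConnected.dist_triangle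
    _ = T.dist x₀ u + 1 := by rw [SimpleGraph.dist_eq_one_iff_adj.mpr h]
  have h2 : T.dist x₀ u ≤ T.dist x₀ v + 1 := by
    calc T.dist x₀ u ≤ T.dist x₀ v + T.dist v u := hT.isConnected.dist_triangle
    _ = T.dist x₀ v + 1 := by rw [SimpleGraph.dist_eq_one_iff_adj.mpr h.symm]
  have h3 := dist_ne_of_adj hT x₀ h
  omega

theorem getVert_one_cons {a b c : V} (q : T.Walk a c) (hq : T.Adj b a) :
    (SimpleGraph.Walk.cons hq q).getVert 1 = a := by
  rw [show (1:ℕ) = 0+1 from rfl, SimpleGraph.Walk.getVert_cons_succ,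
    SimpleGraph.Walk.getVert_zero]

theorem parent_eq (hT : T.IsTree) (x₀ : V) {v u u' : V} (h : T.Adj v u) (h' : T.Adj v u')
    (hd : T.dist x₀ u + 1 = T.dist x₀ v) (hd' : T.dist x₀ u' + 1 = T.dist x₀ v) :
    u = u' := by
  classical
  obtain ⟨P, hP, hPl⟩ := hT.isConnected.exists_path_of_dist x₀ u
  obtain ⟨P', hP', hPl'⟩ := hT.isConnected.exists_path_of_dist x₀ u'
  have hvP : v ∉ P.support := by
    intro hv
    have h1 : T.dist x₀ v ≤ (P.takeUntil v hv).length := SimpleGraph.dist_le _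
    have h2 := SimpleGraph.Walk.length_takeUntil_le P hv
    omega
  have hvP' : v ∉ P'.support := by
    intro hv
    have h1 : T.dist x₀ v ≤ (P'.takeUntil v hv).length := SimpleGraph.dist_le _
    have h2 := SimpleGraph.Walk.length_takeUntil_le P' hv
    omega
  have huniq := hT.IsAcyclic.path_unique
    ⟨P.concat h.symm, isPath_concat hP h.symm hvP⟩
    ⟨P'.concat h'.symm, isPath_concat hP' h'.symm hvP'⟩
  have h2 := congrArg (fun p : T.Path x₀ v => p.1.reverse.getVert 1) huniq
  simpa only [SimpleGraph.Walk.reverse_concat, getVert_one_cons] using h2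

open Classical in
noncomputable def par (T : SimpleGraph V) (x₀ x : V) : V :=
  if h : ∃ p, T.Adj x p ∧ T.dist x₀ p + 1 = T.dist x₀ x then h.choose else x₀

theorem par_spec (hc : T.Connected) {x₀ x : V} (hx : x ≠ x₀) :
    T.Adj x (par T x₀ x) ∧ T.dist x₀ (par T x₀ x) + 1 = T.dist x₀ x := by
  classical
  have hex : ∃ p, T.Adj x p ∧ T.dist x₀ p + 1 = T.dist x₀ x := by
    obtain ⟨P, hP, hPl⟩ := hc.exists_path_of_dist x₀ x
    obtain ⟨w, hadj, q, hcons⟩ := SimpleGraph.Walk.exists_eq_cons_of_ne hx P.reverse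
    have hq : T.dist x₀ w ≤ q.length := by
      have := SimpleGraph.dist_le q.reverse
      rwa [SimpleGraph.Walk.length_reverse] at this
    have hlen : q.length + 1 = T.dist x₀ x := by
      have := congrArg SimpleGraph.Walk.length hcons
      rw [SimpleGraph.Walk.length_reverse, SimpleGraph.Walk.length_cons] at this
      omega
    have htr : T.dist x₀ x ≤ T.dist x₀ w + 1 := by
      calc T.dist x₀ x ≤ T.dist x₀ w + T.dist w x := hc.dist_triangle
      _ = T.dist x₀ w + 1 := by rw [SimpleGraph.dist_eq_one_iff_adj.mpr hadj.symm]
    exact ⟨w, hadj, by omega⟩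
  rw [par]
  rw [dif_pos hex]
  exact hex.choose_spec



theorem key {d : ℕ} (hc : T.Connected)
    (F : Subgroup (Equiv.Perm (Fin d))) (hFt : ∀ i j : Fin d, ∃ a ∈ F, a i = j)
    (H : Subgroup (Equiv.Perm V)) (hHaut : ∀ h ∈ H, IsTreeAut T h)
    (hHtrans : ∀ x y : V, ∃ h ∈ H, h x = y)
    (lam : V → V → Fin d)
    (hloc2 : ∀ x : V, ∀ a ∈ F,
      ∃ h ∈ H, h x = x ∧ ∀ w : V, T.Adj x w → lam x (h w) = a (lam x w))
    {x₀ x : V} (hx : x ≠ x₀)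
    (hp : Equiv.Perm V) (hpH : hp ∈ H) (hpx : hp x₀ = par T x₀ x) :
    ∃ h : Equiv.Perm V, h ∈ H ∧ h x₀ = x ∧
      lam x₀ (h⁻¹ (par T x₀ x)) = lam x₀ (hp⁻¹ x) := by
  obtain ⟨h₁, h₁H, h₁x⟩ := hHtrans x₀ x
  have hadj : T.Adj x (par T x₀ x) := (par_spec hc hx).1
  have hinvx : h₁⁻¹ x = x₀ := by
    rw [← h₁x]; exact h₁.symm_apply_apply x₀
  have hadj0 : T.Adj x₀ (h₁⁻¹ (par T x₀ x)) := by
    have h2 := hHaut h₁⁻¹ (inv_mem h₁H) x (par T x₀ x)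
    rw [show (h₁⁻¹ : Equiv.Perm V) x = x₀ from hinvx] at h2
    exact h2.mpr hadj
  obtain ⟨a, haF, ha⟩ := hFt (lam x₀ (h₁⁻¹ (par T x₀ x))) (lam x₀ (hp⁻¹ x))
  obtain ⟨k, hkH, hkx, hk⟩ := hloc2 x₀ a haF
  have hkinv : (k⁻¹ : Equiv.Perm V) x₀ = x₀ :=
    k.injective (by rw [Equiv.Perm.coe_inv k, Equiv.apply_symm_apply, hkx])
  refine ⟨h₁ * k⁻¹, mul_mem h₁H (inv_mem hkH), ?_, ?_⟩
  · show h₁ (k⁻¹ x₀) = x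
    rw [hkinv, h₁x]
  · have h3 : (h₁ * k⁻¹)⁻¹ (par T x₀ x) = k (h₁⁻¹ (par T x₀ x)) := by
      simp [mul_inv_rev, Equiv.Perm.mul_apply]
    rw [h3, hk _ hadj0, ha]

open Classical in
noncomputable def bmH (T : SimpleGraph V) (hc : T.Connected) {d : ℕ}
    (F : Subgroup (Equiv.Perm (Fin d))) (hFt : ∀ i j : Fin d, ∃ a ∈ F, a i = j)
    (H : Subgroup (Equiv.Perm V)) (hHaut : ∀ h ∈ H, IsTreeAut T h)
    (hHtrans : ∀ x y : V, ∃ h ∈ H, h x = y)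
    (lam : V → V → Fin d)
    (hloc2 : ∀ x : V, ∀ a ∈ F,
      ∃ h ∈ H, h x = x ∧ ∀ w : V, T.Adj x w → lam x (h w) = a (lam x w))
    (x₀ : V) : (x : V) → {h : Equiv.Perm V // h ∈ H ∧ h x₀ = x} := fun x =>
  if hx : x = x₀ then ⟨1, H.one_mem, by rw [hx]; rfl⟩
  else
    have hdec : T.dist x₀ (par T x₀ x) < T.dist x₀ x := by
      have := (par_spec hc hx).2; omega
    ⟨(key hc F hFt H hHaut hHtrans lam hloc2 hx
        (bmH T hc F hFt H hHaut hHtrans lam hloc2 x₀ (par T x₀ x)).1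
        (bmH T hc F hFt H hHaut hHtrans lam hloc2 x₀ (par T x₀ x)).2.1
        (bmH T hc F hFt H hHaut hHtrans lam hloc2 x₀ (par T x₀ x)).2.2).choose,
     (key hc F hFt H hHaut hHtrans lam hloc2 hx
        (bmH T hc F hFt H hHaut hHtrans lam hloc2 x₀ (par T x₀ x)).1
        (bmH T hc F hFt H hHaut hHtrans lam hloc2 x₀ (par T x₀ x)).2.1
        (bmH T hc F hFt H hHaut hHtrans lam hloc2 x₀ (par T x₀ x)).2.2).choose_spec.1,
     (key hc F hFt H hHaut hHtrans lam hloc2 hx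
        (bmH T hc F hFt H hHaut hHtrans lam hloc2 x₀ (par T x₀ x)).1
        (bmH T hc F hFt H hHaut hHtrans lam hloc2 x₀ (par T x₀ x)).2.1
        (bmH T hc F hFt H hHaut hHtrans lam hloc2 x₀ (par T x₀ x)).2.2).choose_spec.2.1⟩
termination_by x => T.dist x₀ x

open Classical in
theorem bmH_symm (hc : T.Connected) {d : ℕ}
    (F : Subgroup (Equiv.Perm (Fin d))) (hFt : ∀ i j : Fin d, ∃ a ∈ F, a i = j)
    (H : Subgroup (Equiv.Perm V)) (hHaut : ∀ h ∈ H, IsTreeAut T h)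
    (hHtrans : ∀ x y : V, ∃ h ∈ H, h x = y)
    (lam : V → V → Fin d)
    (hloc2 : ∀ x : V, ∀ a ∈ F,
      ∃ h ∈ H, h x = x ∧ ∀ w : V, T.Adj x w → lam x (h w) = a (lam x w))
    (x₀ : V) {x : V} (hx : x ≠ x₀) :
    lam x₀ (((bmH T hc F hFt H hHaut hHtrans lam hloc2 x₀ x).1)⁻¹ (par T x₀ x)) =
      lam x₀ (((bmH T hc F hFt H hHaut hHtrans lam hloc2 x₀ (par T x₀ x)).1)⁻¹ x) := by
  rw [bmH]
  rw [dif_neg hx]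
  exact (key hc F hFt H hHaut hHtrans lam hloc2 hx
        (bmH T hc F hFt H hHaut hHtrans lam hloc2 x₀ (par T x₀ x)).1
        (bmH T hc F hFt H hHaut hHtrans lam hloc2 x₀ (par T x₀ x)).2.1
        (bmH T hc F hFt H hHaut hHtrans lam hloc2 x₀ (par T x₀ x)).2.2).choose_spec.2.2

end BMUniv

/-- Universality of U^{(l)}(F): a vertex-transitive group of automorphisms of the
d-regular tree which is locally permutation isomorphic to a transitive F ≤ S_d is
contained in U^{(l)}(F) for a suitable legal labelling l.  Local permutation isomorphy is
witnessed by bijections λ_x from the edges at x to {1,…,d} conjugating the local action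
of the stabilizer of x in H exactly onto F. -/
theorem universal_group_universality {V : Type*} (T : SimpleGraph V)
    (hT : T.IsTree) (d : ℕ) (hd : 3 ≤ d)
    (F : Subgroup (Equiv.Perm (Fin d))) (hFt : ∀ i j : Fin d, ∃ a ∈ F, a i = j)
    (H : Subgroup (Equiv.Perm V)) (hHaut : ∀ h ∈ H, IsTreeAut T h)
    (hHtrans : ∀ x y : V, ∃ h ∈ H, h x = y)
    (lam : V → V → Fin d)
    (hlaminj : ∀ ⦃x u w : V⦄, T.Adj x u → T.Adj x w → lam x u = lam x w → u = w)
    (hlamsurj : ∀ (x : V) (i : Fin d), ∃ w : V, T.Adj x w ∧ lam x w = i)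
    (hloc1 : ∀ x : V, ∀ h ∈ H, h x = x →
      ∃ a ∈ F, ∀ w : V, T.Adj x w → lam x (h w) = a (lam x w))
    (hloc2 : ∀ x : V, ∀ a ∈ F,
      ∃ h ∈ H, h x = x ∧ ∀ w : V, T.Adj x w → lam x (h w) = a (lam x w)) :
    ∃ l : LegalLabelling T d, ∀ h ∈ H, InU T l F h := by

  classical
  obtain ⟨x₀⟩ := hT.isConnected.nonempty
  set hh : (x : V) → {h : Equiv.Perm V // h ∈ H ∧ h x₀ = x} :=
    BMUniv.bmH T hT.isConnected F hFt H hHaut hHtrans lam hloc2 x₀ with hhdef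
  -- basic facts about hh
  have hhx : ∀ x : V, ((hh x).1)⁻¹ x = x₀ := fun x =>
    (hh x).1.injective (by rw [Equiv.Perm.coe_inv (hh x).1, Equiv.apply_symm_apply, (hh x).2.2])
  have hback : ∀ x w : V, T.Adj x w → T.Adj x₀ (((hh x).1)⁻¹ w) := by
    intro x w hxw
    have h2 := hHaut ((hh x).1)⁻¹ (inv_mem (hh x).2.1) x w
    rw [hhx x] at h2
    exact h2.mpr hxw
  -- the legal labelling
  refine ⟨⟨fun u v => lam x₀ (((hh u).1)⁻¹ v), ?_, ?_, ?_⟩, ?_⟩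
  · -- symmetry
    intro u v huv
    have hsym : ∀ a b : V, T.Adj a b → T.dist x₀ b = T.dist x₀ a + 1 →
        lam x₀ (((hh a).1)⁻¹ b) = lam x₀ (((hh b).1)⁻¹ a) := by
      intro a b hab hdist
      have hb0 : b ≠ x₀ := by
        intro hb
        rw [hb, SimpleGraph.dist_self] at hdist
        omega
      have hpars := BMUniv.par_spec hT.isConnected (x₀ := x₀) hb0
      have hpa : a = BMUniv.par T x₀ b :=
        BMUniv.parent_eq hT x₀ hab.symm hpars.1 (by omega) (by omega)
      have hs := BMUniv.bmH_symm hT.isConnected F hFt H hHaut hHtrans lam hloc2 x₀ hb0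
      rw [← hpa] at hs
      exact hs.symm
    rcases BMUniv.dist_adj hT x₀ huv with hc | hc
    · exact hsym u v huv hc
    · exact (hsym v u huv.symm hc).symm
  · -- injectivity
    intro x u w hxu hxw hl
    exact ((hh x).1)⁻¹.injective (hlaminj (hback x u hxu) (hback x w hxw) hl)
  · -- surjectivity
    intro x i
    obtain ⟨w₀, hw₀, hl⟩ := hlamsurj x₀ i
    refine ⟨(hh x).1 w₀, ?_, ?_⟩
    · have h2 := hHaut (hh x).1 (hh x).2.1 x₀ w₀
      rw [(hh x).2.2] at h2
      exact h2.mpr hw₀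
    · show lam x₀ (((hh x).1)⁻¹ ((hh x).1 w₀)) = i
      rw [Equiv.Perm.coe_inv (hh x).1, Equiv.symm_apply_apply, hl]
  · -- membership in the universal group
    intro g hg
    refine ⟨hHaut g hg, ?_⟩
    intro x
    set k : Equiv.Perm V := ((hh (g x)).1)⁻¹ * g * (hh x).1 with hkdef
    have hkH : k ∈ H := mul_mem (mul_mem (inv_mem (hh (g x)).2.1) hg) (hh x).2.1
    have hkx : k x₀ = x₀ := by
      show ((hh (g x)).1)⁻¹ (g ((hh x).1 x₀)) = x₀
      rw [(hh x).2.2]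
      exact (hh (g x)).1.injective
        (by rw [Equiv.Perm.coe_inv (hh (g x)).1, Equiv.apply_symm_apply, (hh (g x)).2.2])
    obtain ⟨a, haF, ha⟩ := hloc1 x₀ k hkH hkx
    refine ⟨a, haF, ?_⟩
    intro w hxw
    have hkw : k (((hh x).1)⁻¹ w) = ((hh (g x)).1)⁻¹ (g w) := by
      show ((hh (g x)).1)⁻¹ (g ((hh x).1 (((hh x).1)⁻¹ w))) = _
      rw [Equiv.Perm.coe_inv (hh x).1, Equiv.apply_symm_apply]
    calc lam x₀ (((hh (g x)).1)⁻¹ (g w)) = lam x₀ (k (((hh x).1)⁻¹ w)) := by rw [hkw]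
    _ = a (lam x₀ (((hh x).1)⁻¹ w)) := ha _ (hback x w hxw)
end
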